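/- arXiv:1406.1579 — 6 statements merged into one kernel-verified Lean document; each statement's English description precedes it below -/
import Mathlib

section
/- Let X ∈ ℝ^{h×w}, p ≥ 1, let k be a multiple of w with s = k/w ≤ h, let B ∈ ℕ, and let H_s = Σ_{i=1}^s 1/i. Define X^(1) = X and, for i = 1,…,s: let r_i be a path maximizing the weight w_{X^(i),p}(r) among all paths r with EMD(r) ≤ ⌊B/i⌋, and let X^(i+1) equal X^(i) except that the entries at the locations of r_i are set to 0. Let Ω = r_1 ∪ ⋯ ∪ r_s. Then Ω ∈ 𝕄⁺_{k, ⌈H_s⌉·B} and ‖X_Ω‖_p^p ≥ (1/4)·max_{Γ ∈ 𝕄_{k,B}} ‖X_Γ‖_p^p. -/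
/-- The Earth Mover's Distance between two finite sets of naturals of equal
cardinality: the minimum, over bijections `π` from `A` onto `B`, of
`∑ a ∈ A, |a - π a|`. -/
noncomputable def natEMD (A B : Finset ℕ) : ℕ :=
  sInf { d : ℕ | ∃ π : ℕ → ℕ, Set.BijOn π ↑A ↑B ∧
    d = ∑ a ∈ A, ((a : ℤ) - (π a : ℤ)).natAbs }

/-- The support of column `c` of a matrix support `Ω`: the set of rows `r`
with `(r, c) ∈ Ω`. -/
def colSupp {h w : ℕ} (Ω : Finset (Fin h × Fin w)) (c : ℕ) : Finset ℕ :=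
  (Ω.filter (fun q => (q.2 : ℕ) = c)).image (fun q => (q.1 : ℕ))

/-- The support-EMD of a matrix support `Ω` (with exactly `s` entries per
column): the sum of the EMDs of consecutive column supports. -/
noncomputable def suppEMD {h w : ℕ} (Ω : Finset (Fin h × Fin w)) : ℕ :=
  ∑ c ∈ Finset.range (w - 1), natEMD (colSupp Ω c) (colSupp Ω (c + 1))

/-- The Constrained EMD model `𝕄_{k,B}` with column sparsity `s = k/w` and
EMD budget `B`: supports in the `h × w` grid with exactly `s` entries per
column and support-EMD at most `B`. -/
noncomputable def cemdModel (h w s B : ℕ) : Set (Finset (Fin h × Fin w)) :=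
  { Ω | (∀ c < w, (colSupp Ω c).card = s) ∧ suppEMD Ω ≤ B }
/-- The entrywise ℓ_p norm of a matrix (for real `p ≥ 1`). -/
noncomputable def matLpNorm {h w : ℕ} (p : ℝ) (X : Matrix (Fin h) (Fin w) ℝ) : ℝ :=
  (∑ r, ∑ c, |X r c| ^ p) ^ (1 / p)

/-- `X_Ω`: the matrix `X` with all entries outside `Ω` set to zero. -/
def matRestrict {h w : ℕ} (X : Matrix (Fin h) (Fin w) ℝ)
    (Ω : Finset (Fin h × Fin w)) : Matrix (Fin h) (Fin w) ℝ :=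
  Matrix.of fun r c => if (r, c) ∈ Ω then X r c else 0

/-- The support of a path `q` (one location per column, in row `q j` for column `j`). -/
def pathSupp {h w : ℕ} (q : ℕ → Fin h) : Finset (Fin h × Fin w) :=
  Finset.univ.image (fun j : Fin w => (q j, j))

/-- The weight of a path: the sum of `|X_{q(j),j}|^p` over the columns `j`. -/
noncomputable def pathWeight {h w : ℕ} (p : ℝ) (X : Matrix (Fin h) (Fin w) ℝ)
    (q : ℕ → Fin h) : ℝ :=
  ∑ j : Fin w, |X (q j) j| ^ p

/-- The EMD of a path: the sum of the vertical moves between consecutive columns. -/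
def pathEMD {h : ℕ} (q : ℕ → Fin h) (w : ℕ) : ℕ :=
  ∑ j ∈ Finset.range (w - 1), ((q j : ℤ) - (q (j + 1) : ℤ)).natAbs


namespace Stmt11


/-- indicator as ℤ -/
def ind (P : Prop) [Decidable P] : ℤ := if P then 1 else 0

lemma layercake (h a b : ℕ) (ha : a < h) (hb : b < h) :
    ((a:ℤ) - b).natAbs = ∑ r ∈ Finset.range (h+1), |ind (a < r) - ind (b < r)| := by
  have hsummand : ∀ r, |ind (a < r) - ind (b < r)| = ind (min a b < r ∧ r ≤ max a b) := by
    intro r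
    unfold ind
    split_ifs <;> simp_all <;> omega
  simp only [hsummand]
  have : ∑ r ∈ Finset.range (h+1), ind (min a b < r ∧ r ≤ max a b)
      = ((Finset.range (h+1)).filter (fun r => min a b < r ∧ r ≤ max a b)).card := by
    rw [Finset.card_filter]
    simp [ind]
  rw [this]
  have : (Finset.range (h+1)).filter (fun r => min a b < r ∧ r ≤ max a b)
      = Finset.Ioc (min a b) (max a b) := by
    ext r
    simp [Finset.mem_filter, Finset.mem_range, Finset.mem_Ioc]
    omega
  rw [this, Nat.card_Ioc]
  omega

lemma ind_sum_range (s : ℕ) (A B : ℤ) (hA0 : 0 ≤ A) (hAs : A ≤ s) (hB0 : 0 ≤ B) (hBs : B ≤ s) :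
    ∑ i ∈ Finset.range s, |ind ((i:ℤ) < A) - ind ((i:ℤ) < B)| = |A - B| := by
  have hsummand : ∀ i : ℕ, |ind ((i:ℤ) < A) - ind ((i:ℤ) < B)|
      = ind (min A B ≤ (i:ℤ) ∧ (i:ℤ) < max A B) := by
    intro i
    unfold ind
    split_ifs <;> simp_all <;> omega
  simp only [hsummand]
  have : ∑ i ∈ Finset.range s, ind (min A B ≤ (i:ℤ) ∧ (i:ℤ) < max A B)
      = ((Finset.range s).filter (fun i : ℕ => min A B ≤ (i:ℤ) ∧ (i:ℤ) < max A B)).card := by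
    rw [Finset.card_filter]; simp [ind]
  rw [this]
  have heq : (Finset.range s).filter (fun i : ℕ => min A B ≤ (i:ℤ) ∧ (i:ℤ) < max A B)
      = Finset.Ico (min A B).toNat (max A B).toNat := by
    ext i
    simp [Finset.mem_filter, Finset.mem_range, Finset.mem_Ico]
    omega
  rw [heq, Nat.card_Ico]
  rw [Int.abs_eq_natAbs]
  omega




structure IsSetCDF (h : ℕ) (s : ℤ) (F : ℕ → ℤ) : Prop where
  zero : F 0 = 0
  mono : ∀ r, F r ≤ F (r+1)
  step : ∀ r, F (r+1) ≤ F r + 1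
  top : ∀ r, h ≤ r → F r = s

structure IsMCDF (h : ℕ) (s : ℤ) (G : ℕ → ℤ) : Prop where
  zero : G 0 = 0
  mono : ∀ r, G r ≤ G (r+1)
  top : ∀ r, h ≤ r → G r = s

lemma mono_le_of_le {F : ℕ → ℤ} (hm : ∀ r, F r ≤ F (r+1)) :
    ∀ {a b : ℕ}, a ≤ b → F a ≤ F b := by
  intro a b hab
  induction b with
  | zero => simp_all
  | succ n ih =>
    rcases Nat.lt_or_ge a (n+1) with hc | hc
    · exact le_trans (ih (by omega)) (hm n)
    · have : a = n + 1 := by omega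
      simp [this]

lemma IsSetCDF.le_of_le {h : ℕ} {s : ℤ} {F : ℕ → ℤ} (hF : IsSetCDF h s F) :
    ∀ {a b : ℕ}, a ≤ b → F a ≤ F b := mono_le_of_le hF.mono

lemma IsMCDF.le_of_le {h : ℕ} {s : ℤ} {G : ℕ → ℤ} (hG : IsMCDF h s G) :
    ∀ {a b : ℕ}, a ≤ b → G a ≤ G b := mono_le_of_le hG.mono

lemma IsSetCDF.le_r {h : ℕ} {s : ℤ} {F : ℕ → ℤ} (hF : IsSetCDF h s F) (r : ℕ) :
    F r ≤ r := by
  induction r with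
  | zero => simp [hF.zero]
  | succ n ih => have := hF.step n; push_cast; omega

lemma IsMCDF.nonneg {h : ℕ} {s : ℤ} {G : ℕ → ℤ} (hG : IsMCDF h s G) (r : ℕ) :
    0 ≤ G r := by
  have h1 := hG.le_of_le (Nat.zero_le r)
  have h0 := hG.zero
  omega

noncomputable def jmp (G : ℕ → ℤ) (r : ℕ) : ℤ := if G r < G (r+1) then 1 else 0

lemma jmp_nonneg (G : ℕ → ℤ) (r : ℕ) : 0 ≤ jmp G r := by unfold jmp; split_ifs <;> omega

lemma jmp_le_one (G : ℕ → ℤ) (r : ℕ) : jmp G r ≤ 1 := by unfold jmp; split_ifs <;> omega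

lemma jmp_le_diff {h : ℕ} {s : ℤ} {G : ℕ → ℤ} (hG : IsMCDF h s G) (r : ℕ) :
    jmp G r ≤ G (r+1) - G r := by
  have := hG.mono r
  unfold jmp; split_ifs <;> omega

noncomputable def lhat (h : ℕ) (L : ℕ → ℤ) : ℕ → ℤ := fun r =>
  if h ≤ r then L h else max (L r) (lhat h L (r+1) - 1)
termination_by r => h - r
decreasing_by omega

lemma lhat_eq (h : ℕ) (L : ℕ → ℤ) (r : ℕ) :
    lhat h L r = if h ≤ r then L h else max (L r) (lhat h L (r+1) - 1) := by
  rw [lhat]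

noncomputable def rhat (h : ℕ) (R : ℕ → ℤ) (G' : ℕ → ℤ) : ℕ → ℤ := fun r =>
  if h ≤ r then R h else min (R r) (rhat h R G' (r+1) - jmp G' r)
termination_by r => h - r
decreasing_by omega

lemma rhat_eq (h : ℕ) (R G' : ℕ → ℤ) (r : ℕ) :
    rhat h R G' r = if h ≤ r then R h else min (R r) (rhat h R G' (r+1) - jmp G' r) := by
  rw [rhat]

noncomputable def clampF (h : ℕ) (F G' : ℕ → ℤ) : ℕ → ℤ
  | 0 => 0
  | (r+1) => max (lhat h (fun ρ => min (F ρ) (G' ρ)) (r+1))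
      (min (clampF h F G' r + jmp G' r) (rhat h (fun ρ => max (F ρ) (G' ρ)) G' (r+1)))

lemma s3cdf (h : ℕ) (s : ℤ) (F G' : ℕ → ℤ) (hF : IsSetCDF h s F) (hG' : IsMCDF h s G') :
    ∃ F', IsSetCDF h s F' ∧ (∀ r, G' r < G' (r+1) → F' r < F' (r+1)) ∧
      ∀ r, |F' r - F r| + |F' r - G' r| ≤ |F r - G' r| := by
  set L : ℕ → ℤ := fun ρ => min (F ρ) (G' ρ) with hLdef
  set R : ℕ → ℤ := fun ρ => max (F ρ) (G' ρ) with hRdef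
  have hLρ : ∀ ρ, L ρ = min (F ρ) (G' ρ) := fun _ => rfl
  have hRρ : ∀ ρ, R ρ = max (F ρ) (G' ρ) := fun _ => rfl
  have hFh : F h = s := hF.top h le_rfl
  have hGh : G' h = s := hG'.top h le_rfl
  have hLh : L h = s := by rw [hLρ, hFh, hGh, min_self]
  have hRh : R h = s := by rw [hRρ, hFh, hGh, max_self]
  have lhat_le_F : ∀ n r, h - r ≤ n → lhat h L r ≤ F r := by
    intro n
    induction n with
    | zero =>
      intro r hr
      rw [lhat_eq, if_pos (by omega), hLh, ← hFh]
      exact hF.le_of_le (by omega)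
    | succ n ih =>
      intro r hr
      by_cases hc : h ≤ r
      · rw [lhat_eq, if_pos hc, hLh, ← hFh]; exact hF.le_of_le hc
      · rw [lhat_eq, if_neg hc]
        have h1 : L r ≤ F r := by rw [hLρ]; exact min_le_left _ _
        have h2 : lhat h L (r+1) ≤ F (r+1) := ih (r+1) (by omega)
        have := hF.step r
        exact max_le h1 (by omega)
  have lhat_ge : ∀ r, L r ≤ lhat h L r := by
    intro r
    by_cases hc : h ≤ r
    · rw [lhat_eq, if_pos hc, hLρ, hLh, hF.top r hc, hG'.top r hc, min_self]
    · rw [lhat_eq, if_neg hc]; exact le_max_left _ _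
  have lhat_step : ∀ r, lhat h L (r+1) ≤ lhat h L r + 1 := by
    intro r
    by_cases hc : h ≤ r
    · rw [lhat_eq h L r, if_pos hc, lhat_eq h L (r+1), if_pos (by omega)]; omega
    · rw [lhat_eq h L r, if_neg hc]
      have := le_max_right (L r) (lhat h L (r+1) - 1)
      omega
  have rhat_ge : ∀ n r, h - r ≤ n → G' r ≤ rhat h R G' r := by
    intro n
    induction n with
    | zero =>
      intro r hr
      rw [rhat_eq, if_pos (by omega), hRh, hG'.top r (by omega)]
    | succ n ih =>
      intro r hr
      by_cases hc : h ≤ r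
      · rw [rhat_eq, if_pos hc, hRh, hG'.top r hc]
      · rw [rhat_eq, if_neg hc]
        refine le_min (by rw [hRρ]; exact le_max_right _ _) ?_
        have h2 : G' (r+1) ≤ rhat h R G' (r+1) := ih (r+1) (by omega)
        have hj := jmp_le_diff hG' r
        omega
  have rhat_le : ∀ r, rhat h R G' r ≤ R r := by
    intro r
    by_cases hc : h ≤ r
    · rw [rhat_eq, if_pos hc, hRh, hRρ]
      refine le_max_of_le_right ?_
      rw [← hGh]; exact hG'.le_of_le hc
    · rw [rhat_eq, if_neg hc]; exact min_le_left _ _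
  have rhat_step : ∀ r, rhat h R G' r + jmp G' r ≤ rhat h R G' (r+1) := by
    intro r
    by_cases hc : h ≤ r
    · rw [rhat_eq h R G' r, if_pos hc, rhat_eq h R G' (r+1), if_pos (by omega)]
      have hj : jmp G' r = 0 := by
        unfold jmp
        rw [if_neg]
        rw [hG'.top r hc, hG'.top (r+1) (by omega)]; omega
      omega
    · rw [rhat_eq h R G' r, if_neg hc]
      have := min_le_right (R r) (rhat h R G' (r+1) - jmp G' r)
      omega
  have feas : ∀ n r, h - r ≤ n → lhat h L r ≤ rhat h R G' r := by
    intro n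
    induction n with
    | zero =>
      intro r hr
      rw [lhat_eq, if_pos (by omega), rhat_eq, if_pos (by omega), hLh, hRh]
    | succ n ih =>
      intro r hr
      by_cases hc : h ≤ r
      · rw [lhat_eq, if_pos hc, rhat_eq, if_pos hc, hLh, hRh]
      · rw [lhat_eq, if_neg hc, rhat_eq, if_neg hc]
        have IH : lhat h L (r+1) ≤ rhat h R G' (r+1) := ih (r+1) (by omega)
        have hjle := jmp_le_one G' r
        have hjnn := jmp_nonneg G' r
        have hLR : L r ≤ R r := by
          rw [hLρ, hRρ]; exact (min_le_left _ _).trans (le_max_left _ _)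
        have hβ : L r + jmp G' r ≤ rhat h R G' (r+1) := by
          have h1 : L r ≤ G' r := by rw [hLρ]; exact min_le_right _ _
          have h2 : G' (r+1) ≤ rhat h R G' (r+1) := rhat_ge (h - (r+1)) (r+1) le_rfl
          have hj := jmp_le_diff hG' r
          omega
        have hγ : lhat h L (r+1) - 1 ≤ R r := by
          have h1 : lhat h L (r+1) ≤ F (r+1) := lhat_le_F (h - (r+1)) (r+1) le_rfl
          have h2 : F (r+1) ≤ F r + 1 := hF.step r
          have h3 : F r ≤ R r := by rw [hRρ]; exact le_max_left _ _
          omega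
        refine max_le (le_min hLR (by omega)) (le_min (by omega) (by omega))
  set F' : ℕ → ℤ := clampF h F G' with hF'def
  have hF'zero : F' 0 = 0 := by rw [hF'def]; rfl
  have hF'succ : ∀ r, F' (r+1) = max (lhat h L (r+1))
      (min (F' r + jmp G' r) (rhat h R G' (r+1))) := by
    intro r; rw [hF'def]; rfl
  have inv : ∀ r, lhat h L r ≤ F' r ∧ F' r ≤ rhat h R G' r := by
    intro r
    induction r with
    | zero =>
      constructor
      · rw [hF'zero]
        calc lhat h L 0 ≤ F 0 := lhat_le_F h 0 (by omega)
          _ = 0 := hF.zero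
      · rw [hF'zero]
        calc (0:ℤ) = G' 0 := hG'.zero.symm
          _ ≤ rhat h R G' 0 := rhat_ge h 0 (by omega)
    | succ n ih =>
      rw [hF'succ n]
      exact ⟨le_max_left _ _, max_le (feas h (n+1) (by omega)) (min_le_right _ _)⟩
  have mono' : ∀ r, F' r + jmp G' r ≤ F' (r+1) := by
    intro r
    rw [hF'succ r]
    refine le_max_of_le_right (le_min le_rfl ?_)
    have h1 := rhat_step r
    have h2 := (inv r).2
    omega
  have step' : ∀ r, F' (r+1) ≤ F' r + 1 := by
    intro r
    rw [hF'succ r]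
    refine max_le ?_ ?_
    · have := lhat_step r
      have := (inv r).1
      omega
    · have := jmp_le_one G' r
      have := min_le_left (F' r + jmp G' r) (rhat h R G' (r+1))
      omega
  have hF'top : ∀ r, h ≤ r → F' r = s := by
    intro r hr
    have hA := (inv r).1
    have hB := (inv r).2
    rw [lhat_eq, if_pos hr, hLh] at hA
    rw [rhat_eq, if_pos hr, hRh] at hB
    omega
  refine ⟨F', ⟨hF'zero, fun r => by have := mono' r; have := jmp_nonneg G' r; omega,
    step', hF'top⟩, ?_, ?_⟩
  · intro r hjump
    have hj : jmp G' r = 1 := by unfold jmp; rw [if_pos hjump]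
    have := mono' r; omega
  · intro r
    have h1 : L r ≤ F' r := le_trans (lhat_ge r) (inv r).1
    have h2 : F' r ≤ R r := le_trans (inv r).2 (rhat_le r)
    rw [hLρ] at h1
    rw [hRρ] at h2
    rcases le_total (F r) (G' r) with hc | hc
    · rw [min_eq_left hc] at h1
      rw [max_eq_right hc] at h2
      rcases abs_cases (F' r - F r) with ⟨e1,_⟩|⟨e1,_⟩ <;>
        rcases abs_cases (F' r - G' r) with ⟨e2,_⟩|⟨e2,_⟩ <;>
        rcases abs_cases (F r - G' r) with ⟨e3,_⟩|⟨e3,_⟩ <;> omega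
    · rw [min_eq_right hc] at h1
      rw [max_eq_left hc] at h2
      rcases abs_cases (F' r - F r) with ⟨e1,_⟩|⟨e1,_⟩ <;>
        rcases abs_cases (F' r - G' r) with ⟨e2,_⟩|⟨e2,_⟩ <;>
        rcases abs_cases (F r - G' r) with ⟨e3,_⟩|⟨e3,_⟩ <;> omega


/-- L1 distance of two CDFs up to h -/
noncomputable def dN (h : ℕ) (F G : ℕ → ℤ) : ℤ := ∑ r ∈ Finset.range (h+1), |F r - G r|

lemma dN_nonneg (h : ℕ) (F G : ℕ → ℤ) : 0 ≤ dN h F G :=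
  Finset.sum_nonneg (fun _ _ => abs_nonneg _)

lemma dN_comm (h : ℕ) (F G : ℕ → ℤ) : dN h F G = dN h G F := by
  unfold dN; exact Finset.sum_congr rfl (fun r _ => abs_sub_comm _ _)

lemma dN_triangle (h : ℕ) (F G K : ℕ → ℤ) : dN h F K ≤ dN h F G + dN h G K := by
  unfold dN
  rw [← Finset.sum_add_distrib]
  exact Finset.sum_le_sum (fun r _ => abs_sub_le _ _ _)

def Good (h : ℕ) (s : ℤ) (G F : ℕ → ℤ) : Prop :=
  IsSetCDF h s F ∧ ∀ r, G r < G (r+1) → F r < F (r+1)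

lemma good_exists (h : ℕ) (s : ℤ) (hs0 : 0 ≤ s) (hsh : s ≤ (h:ℤ)) (G : ℕ → ℤ)
    (hG : IsMCDF h s G) : ∃ F, Good h s G F := by
  have hid : IsSetCDF h s (fun r => min (r:ℤ) s) := by
    refine ⟨by simp [hs0], fun r => by push_cast; omega, fun r => by push_cast; omega,
      fun r hr => by
        have : s ≤ (r:ℤ) := le_trans hsh (by exact_mod_cast hr)
        simp [min_eq_right this]⟩
  obtain ⟨F', hF', hjump, _⟩ := s3cdf h s _ G hid hG
  exact ⟨F', hF', hjump⟩

lemma chain_fwd (h : ℕ) (s : ℤ) (G : ℕ → ℕ → ℤ) (hG : ∀ c, IsMCDF h s (G c))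
    (F0 : ℕ → ℤ) (hF0 : Good h s (G 0) F0) (n : ℕ) :
    ∃ Fc : ℕ → ℕ → ℤ, Fc 0 = F0 ∧ (∀ c ≤ n, Good h s (G c) (Fc c)) ∧
      (∑ c ∈ Finset.range n, dN h (Fc c) (Fc (c+1))) + dN h (Fc n) (G n)
        ≤ dN h F0 (G 0) + ∑ c ∈ Finset.range n, dN h (G c) (G (c+1)) := by
  induction n with
  | zero =>
    refine ⟨fun _ => F0, rfl, fun c hc => ?_, by simp⟩
    have hc0 : c = 0 := by omega
    rw [hc0]; exact hF0
  | succ n ih =>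
    obtain ⟨Fc, hFc0, hGood, hbound⟩ := ih
    obtain ⟨F', hF'cdf, hF'jump, hF'pt⟩ :=
      s3cdf h s (Fc n) (G (n+1)) (hGood n le_rfl).1 (hG (n+1))
    refine ⟨fun c => if c ≤ n then Fc c else F', by simp [hFc0], ?_, ?_⟩
    · intro c hc
      by_cases hcn : c ≤ n
      · simp only [if_pos hcn]; exact hGood c hcn
      · have : c = n + 1 := by omega
        simp only [if_neg hcn]
        exact ⟨hF'cdf, by rw [this]; exact hF'jump⟩
    · have hstep : dN h F' (Fc n) + dN h F' (G (n+1)) ≤ dN h (Fc n) (G (n+1)) := by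
        unfold dN
        rw [← Finset.sum_add_distrib]
        exact Finset.sum_le_sum (fun r _ => hF'pt r)
      have htri : dN h (Fc n) (G (n+1)) ≤ dN h (Fc n) (G n) + dN h (G n) (G (n+1)) :=
        dN_triangle h _ _ _
      have hsum1 : ∑ c ∈ Finset.range (n+1),
          dN h (if c ≤ n then Fc c else F') (if c+1 ≤ n then Fc (c+1) else F')
          = (∑ c ∈ Finset.range n, dN h (Fc c) (Fc (c+1))) + dN h (Fc n) F' := by
        rw [Finset.sum_range_succ]
        congr 1
        · refine Finset.sum_congr rfl (fun c hc => ?_)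
          have hc' := Finset.mem_range.mp hc
          rw [if_pos (by omega), if_pos (by omega)]
        · rw [if_pos le_rfl, if_neg (by omega)]
      rw [Finset.sum_range_succ (fun c => dN h (G c) (G (c+1)))]
      rw [hsum1]
      have hbeta : (fun c => if c ≤ n then Fc c else F') (n + 1) = F' := by
        show (if n + 1 ≤ n then Fc (n+1) else F') = F'
        rw [if_neg (by omega)]
      rw [hbeta]
      have hc1 : dN h (Fc n) F' = dN h F' (Fc n) := dN_comm _ _ _
      omega

lemma chain_main (h w : ℕ) (s : ℤ) (hs0 : 0 ≤ s) (hsh : s ≤ (h:ℤ))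
    (G : ℕ → ℕ → ℤ) (hG : ∀ c, IsMCDF h s (G c)) :
    ∃ Fc : ℕ → ℕ → ℤ, (∀ c < w, Good h s (G c) (Fc c)) ∧
      ∑ c ∈ Finset.range (w-1), dN h (Fc c) (Fc (c+1))
        ≤ ∑ c ∈ Finset.range (w-1), dN h (G c) (G (c+1)) := by
  rcases Nat.eq_zero_or_pos w with hw | hw
  · subst hw
    obtain ⟨F, hF⟩ := good_exists h s hs0 hsh (G 0) (hG 0)
    exact ⟨fun _ => F, fun c hc => by omega, by simp⟩
  set n := w - 1 with hn
  -- minimal potential spreads at both ends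
  set A : Set ℕ := {m : ℕ | ∃ F, Good h s (G 0) F ∧ (dN h F (G 0)).toNat = m} with hA
  set Aw : Set ℕ := {m : ℕ | ∃ F, Good h s (G n) F ∧ (dN h F (G n)).toNat = m} with hAw
  set a0 : ℕ := sInf A with ha0
  set aw : ℕ := sInf Aw with haw
  have hAne : A.Nonempty := by
    obtain ⟨F, hF⟩ := good_exists h s hs0 hsh (G 0) (hG 0)
    exact ⟨_, F, hF, rfl⟩
  have hAwne : Aw.Nonempty := by
    obtain ⟨F, hF⟩ := good_exists h s hs0 hsh (G n) (hG n)
    exact ⟨_, F, hF, rfl⟩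
  obtain ⟨F0, hF0good, hF0val⟩ := Nat.sInf_mem hAne
  obtain ⟨Fw, hFwgood, hFwval⟩ := Nat.sInf_mem hAwne
  rcases le_total a0 aw with hcase | hcase
  · -- forward chain
    obtain ⟨Fc, hFc0, hGood, hbound⟩ := chain_fwd h s G hG F0 hF0good n
    refine ⟨Fc, fun c hc => hGood c (by omega), ?_⟩
    have hlast : (aw : ℤ) ≤ dN h (Fc n) (G n) := by
      have hmem : (dN h (Fc n) (G n)).toNat ∈ Aw := ⟨Fc n, hGood n le_rfl, rfl⟩
      have h1 := Nat.sInf_le hmem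
      have h2 := dN_nonneg h (Fc n) (G n)
      omega
    have hF0dN : dN h F0 (G 0) = (a0 : ℤ) := by
      have := dN_nonneg h F0 (G 0); omega
    have hAAw : (a0 : ℤ) ≤ (aw : ℤ) := by exact_mod_cast hcase
    omega
  · -- backward chain
    set G' : ℕ → ℕ → ℤ := fun c => G (n - c) with hG'
    have hG'm : ∀ c, IsMCDF h s (G' c) := fun c => hG (n - c)
    have hFwgood' : Good h s (G' 0) Fw := by rw [hG']; simpa using hFwgood
    obtain ⟨Fc, hFc0, hGood, hbound⟩ := chain_fwd h s G' hG'm Fw hFwgood' n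
    refine ⟨fun c => Fc (n - c), fun c hc => ?_, ?_⟩
    · have h1 : n - c ≤ n := by omega
      have h2 := hGood (n - c) h1
      have h3 : n - (n - c) = c := by omega
      have h2' : Good h s (G (n - (n - c))) (Fc (n - c)) := h2
      rw [h3] at h2'
      exact h2'
    · have hG'0 : G' n = G 0 := by rw [hG']; simp
      have hlast : (a0 : ℤ) ≤ dN h (Fc n) (G' n) := by
        have hmem : (dN h (Fc n) (G' n)).toNat ∈ A := by
          refine ⟨Fc n, ?_, by rw [hG'0]⟩
          rw [← hG'0]; exact hGood n le_rfl
        have h1 := Nat.sInf_le hmem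
        have h2 := dN_nonneg h (Fc n) (G' n)
        omega
      have hFwdN : dN h Fw (G' 0) = (aw : ℤ) := by
        rw [hG']; simp only [Nat.sub_zero]
        have := dN_nonneg h Fw (G n); omega
      have hAAw : (aw : ℤ) ≤ (a0 : ℤ) := by exact_mod_cast hcase
      -- reflect the sums
      have hrefl1 : ∑ c ∈ Finset.range n, dN h (Fc (n - c)) (Fc (n - (c+1)))
          = ∑ c ∈ Finset.range n, dN h (Fc c) (Fc (c+1)) := by
        rw [← Finset.sum_range_reflect (fun c => dN h (Fc c) (Fc (c+1))) n]
        refine Finset.sum_congr rfl (fun c hc => ?_)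
        have hc' := Finset.mem_range.mp hc
        have e1 : n - 1 - c = n - (c+1) := by omega
        have e2 : n - 1 - c + 1 = n - c := by omega
        rw [e2, e1, dN_comm]
      have hrefl2 : ∑ c ∈ Finset.range n, dN h (G' c) (G' (c+1))
          = ∑ c ∈ Finset.range n, dN h (G c) (G (c+1)) := by
        rw [← Finset.sum_range_reflect (fun c => dN h (G c) (G (c+1))) n]
        refine Finset.sum_congr rfl (fun c hc => ?_)
        have hc' := Finset.mem_range.mp hc
        show dN h (G (n - c)) (G (n - (c+1))) = dN h (G (n - 1 - c)) (G (n - 1 - c + 1))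
        have e2 : n - 1 - c = n - (c + 1) := by omega
        have e3 : n - 1 - c + 1 = n - c := by omega
        rw [e3, e2, dN_comm]
      rw [hrefl1]
      rw [hrefl2] at hbound
      omega


/-- the jump set of a CDF -/
noncomputable def jset (h : ℕ) (F : ℕ → ℤ) : Finset ℕ :=
  (Finset.range h).filter (fun x => F x < F (x+1))

lemma card_filter_jump {h : ℕ} {s : ℤ} {F : ℕ → ℤ} (hF : IsSetCDF h s F) :
    ∀ r, ((((Finset.range r).filter (fun x => F x < F (x+1))).card : ℤ)) = F r := by
  intro r
  induction r with
  | zero => simp [hF.zero]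
  | succ n ih =>
    rw [Finset.range_add_one, Finset.filter_insert]
    have hmono := hF.mono n
    have hstep := hF.step n
    by_cases hj : F n < F (n+1)
    · rw [if_pos hj, Finset.card_insert_of_notMem (by simp)]
      push_cast
      omega
    · rw [if_neg hj]
      omega
  
lemma jset_card {h : ℕ} {s : ℤ} {F : ℕ → ℤ} (hF : IsSetCDF h s F) :
    ((jset h F).card : ℤ) = s := by
  rw [jset, card_filter_jump hF, hF.top h le_rfl]

lemma jset_mem {h : ℕ} {F : ℕ → ℤ} {x : ℕ} :
    x ∈ jset h F ↔ x < h ∧ F x < F (x+1) := by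
  simp [jset]

lemma jset_filter_lt {h : ℕ} {s : ℤ} {F : ℕ → ℤ} (hF : IsSetCDF h s F) {r : ℕ} (hr : r ≤ h) :
    (jset h F).filter (fun x => x < r) = (Finset.range r).filter (fun x => F x < F (x+1)) := by
  ext x
  simp only [jset, Finset.mem_filter, Finset.mem_range]
  constructor
  · rintro ⟨⟨h1, h2⟩, h3⟩; exact ⟨h3, h2⟩
  · rintro ⟨h1, h2⟩; exact ⟨⟨by omega, h2⟩, h1⟩

lemma jset_count {h : ℕ} {s : ℤ} {F : ℕ → ℤ} (hF : IsSetCDF h s F) {r : ℕ} (hr : r ≤ h) :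
    ((((jset h F).filter (fun x => x < r)).card : ℤ)) = F r := by
  rw [jset_filter_lt hF hr, card_filter_jump hF]


section Threshold

/-- the i-th smallest element of the jump set -/
noncomputable def jel (h : ℕ) (F : ℕ → ℤ) (s : ℕ) (hcard : (jset h F).card = s) (i : Fin s) : ℕ :=
  ((jset h F).orderIsoOfFin hcard i : ℕ)

variable {h s : ℕ} {F : ℕ → ℤ}

lemma jel_mem (hcard : (jset h F).card = s) (i : Fin s) : jel h F s hcard i ∈ jset h F :=
  ((jset h F).orderIsoOfFin hcard i).2

lemma jel_lt_iff (hF : IsSetCDF h (s:ℤ) F) (hcard : (jset h F).card = s)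
    {r : ℕ} (hr : r ≤ h) (i : Fin s) :
    jel h F s hcard i < r ↔ (i : ℤ) < F r := by
  constructor
  · intro hlt
    -- i+1 ≤ #{x ∈ jset, x < r} = F r
    have hsub : Finset.image (fun k : Fin (i+1) =>
        jel h F s hcard (Fin.castLE (by omega) k)) Finset.univ
        ⊆ (jset h F).filter (fun x => x < r) := by
      intro x hx
      obtain ⟨k, _, rfl⟩ := Finset.mem_image.mp hx
      refine Finset.mem_filter.mpr ⟨jel_mem hcard _, ?_⟩
      have hle : (Fin.castLE (by omega : i+1 ≤ s) k) ≤ i := by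
        simp [Fin.le_def]
        omega
      have := ((jset h F).orderIsoOfFin hcard).monotone hle
      have hmono : jel h F s hcard (Fin.castLE (by omega) k) ≤ jel h F s hcard i := this
      omega
    have hinj : Function.Injective (fun k : Fin (i+1) =>
        jel h F s hcard (Fin.castLE (by omega) k)) := by
      intro a b hab
      have h1 : ((jset h F).orderIsoOfFin hcard (Fin.castLE (by omega) a))
          = ((jset h F).orderIsoOfFin hcard (Fin.castLE (by omega) b)) := Subtype.ext hab
      have h2 := ((jset h F).orderIsoOfFin hcard).injective h1
      exact Fin.castLE_injective _ h2
    have hcard2 := Finset.card_le_card hsub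
    rw [Finset.card_image_of_injective _ hinj, Finset.card_univ, Fintype.card_fin] at hcard2
    have := jset_count hF hr (r := r)
    omega
  · intro hlt
    by_contra hge
    push_neg at hge
    -- F r = #{x ∈ jset, x < r} ≤ i
    have hsub : (jset h F).filter (fun x => x < r) ⊆
        Finset.image (fun k : Fin i => jel h F s hcard (Fin.castLE (by omega) k))
          Finset.univ := by
      intro x hx
      obtain ⟨hxm, hxr⟩ := Finset.mem_filter.mp hx
      obtain ⟨j, hj⟩ := ((jset h F).orderIsoOfFin hcard).surjective ⟨x, hxm⟩
      have hxj : jel h F s hcard j = x := congrArg Subtype.val hj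
      have hji : j < i := by
        by_contra hji
        push_neg at hji
        have := ((jset h F).orderIsoOfFin hcard).monotone hji
        have h2 : jel h F s hcard i ≤ jel h F s hcard j := this
        omega
      refine Finset.mem_image.mpr ⟨⟨j, hji⟩, Finset.mem_univ _, ?_⟩
      have hcast : (Fin.castLE (by omega : i ≤ s) ⟨(j:ℕ), hji⟩) = j := Fin.ext rfl
      rw [hcast, hxj]
    have hcard2 := Finset.card_le_card hsub
    have hcard3 := Finset.card_image_le (s := (Finset.univ : Finset (Fin i)))
      (f := fun k : Fin i => jel h F s hcard (Fin.castLE (by omega) k))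
    rw [Finset.card_univ, Fintype.card_fin] at hcard3
    have := jset_count hF hr (r := r)
    omega

lemma jel_lt_h (hcard : (jset h F).card = s) (i : Fin s) : jel h F s hcard i < h :=
  (jset_mem.mp (jel_mem hcard i)).1

end Threshold

section EMDBound

variable {h s : ℕ} {F F' : ℕ → ℤ}

/-- transport bijection between jump sets -/
noncomputable def jbij (h : ℕ) (F F' : ℕ → ℤ) (s : ℕ)
    (hc : (jset h F).card = s) (hc' : (jset h F').card = s) : ℕ → ℕ := fun x =>
  if hx : x ∈ jset h F then
    jel h F' s hc' (((jset h F).orderIsoOfFin hc).symm ⟨x, hx⟩)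
  else x

lemma jbij_apply_jel (hc : (jset h F).card = s) (hc' : (jset h F').card = s) (i : Fin s) :
    jbij h F F' s hc hc' (jel h F s hc i) = jel h F' s hc' i := by
  unfold jbij
  rw [dif_pos (jel_mem hc i)]
  congr 1
  have : (⟨jel h F s hc i, jel_mem hc i⟩ : {x // x ∈ jset h F})
      = (jset h F).orderIsoOfFin hc i := rfl
  rw [this, OrderIso.symm_apply_apply]

lemma jbij_bijOn (hc : (jset h F).card = s) (hc' : (jset h F').card = s) :
    Set.BijOn (jbij h F F' s hc hc') ↑(jset h F) ↑(jset h F') := by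
  refine ⟨?_, ?_, ?_⟩
  · intro x hx
    have hx' : x ∈ jset h F := hx
    unfold jbij
    rw [dif_pos hx']
    exact jel_mem hc' _
  · intro x hx y hy hxy
    have hx' : x ∈ jset h F := hx
    have hy' : y ∈ jset h F := hy
    unfold jbij at hxy
    rw [dif_pos hx', dif_pos hy'] at hxy
    have h1 : ((jset h F').orderIsoOfFin hc' (((jset h F).orderIsoOfFin hc).symm ⟨x, hx'⟩))
        = ((jset h F').orderIsoOfFin hc' (((jset h F).orderIsoOfFin hc).symm ⟨y, hy'⟩)) :=
      Subtype.ext hxy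
    have h2 := ((jset h F').orderIsoOfFin hc').injective h1
    have h3 := (((jset h F).orderIsoOfFin hc).symm).injective h2
    exact congrArg Subtype.val h3
  · intro y hy
    have hy' : y ∈ jset h F' := hy
    set i := ((jset h F').orderIsoOfFin hc').symm ⟨y, hy'⟩ with hi
    refine ⟨jel h F s hc i, ?_, ?_⟩
    · exact jel_mem hc i
    · rw [jbij_apply_jel]
      unfold jel
      rw [hi, OrderIso.apply_symm_apply]

lemma natEMD_le_dN (hF : IsSetCDF h (s:ℤ) F) (hF' : IsSetCDF h (s:ℤ) F')
    (hc : (jset h F).card = s) (hc' : (jset h F').card = s) :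
    (natEMD (jset h F) (jset h F') : ℤ) ≤ dN h F F' := by
  have hmem : (∑ a ∈ jset h F, ((a : ℤ) - (jbij h F F' s hc hc' a : ℤ)).natAbs)
      ∈ { d : ℕ | ∃ π : ℕ → ℕ, Set.BijOn π ↑(jset h F) ↑(jset h F') ∧
        d = ∑ a ∈ (jset h F), ((a : ℤ) - (π a : ℤ)).natAbs } :=
    ⟨jbij h F F' s hc hc', jbij_bijOn hc hc', rfl⟩
  have hle : natEMD (jset h F) (jset h F')
      ≤ ∑ a ∈ jset h F, ((a : ℤ) - (jbij h F F' s hc hc' a : ℤ)).natAbs := by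
    unfold natEMD
    exact Nat.sInf_le hmem
  have hcast : (natEMD (jset h F) (jset h F') : ℤ)
      ≤ ∑ a ∈ jset h F, ((((a : ℤ) - (jbij h F F' s hc hc' a : ℤ)).natAbs : ℕ) : ℤ) := by
    rw [← Nat.cast_sum]
    exact_mod_cast hle
  refine le_trans hcast ?_
  have hsum : (∑ a ∈ jset h F, ((((a : ℤ) - (jbij h F F' s hc hc' a : ℤ)).natAbs : ℕ) : ℤ))
      = ∑ i : Fin s, (((jel h F s hc i : ℤ) - (jel h F' s hc' i : ℤ)).natAbs : ℤ) := by
    rw [← Finset.sum_coe_sort (jset h F)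
      (fun a => ((((a : ℤ) - (jbij h F F' s hc hc' a : ℤ)).natAbs : ℕ) : ℤ))]
    rw [← Equiv.sum_comp ((jset h F).orderIsoOfFin hc).toEquiv
      (fun a => ((((a:ℕ) : ℤ) - (jbij h F F' s hc hc' (a:ℕ) : ℤ)).natAbs : ℤ))]
    refine Finset.sum_congr rfl (fun i _ => ?_)
    have he : ((((jset h F).orderIsoOfFin hc).toEquiv i : {x // x ∈ jset h F}) : ℕ)
        = jel h F s hc i := rfl
    show ((((((jset h F).orderIsoOfFin hc).toEquiv i : {x // x ∈ jset h F}) : ℕ) : ℤ)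
        - (jbij h F F' s hc hc' (((jset h F).orderIsoOfFin hc).toEquiv i : ℕ) : ℤ)).natAbs
        = (((jel h F s hc i : ℤ) - (jel h F' s hc' i : ℤ)).natAbs : ℤ)
    rw [he, jbij_apply_jel]
  rw [hsum]
  have hlc : ∀ i : Fin s, (((jel h F s hc i : ℤ) - (jel h F' s hc' i : ℤ)).natAbs : ℤ)
      = ∑ r ∈ Finset.range (h+1),
        |ind (jel h F s hc i < r) - ind (jel h F' s hc' i < r)| := by
    intro i
    exact layercake h _ _ (jel_lt_h hc i) (jel_lt_h hc' i)
  rw [Finset.sum_congr rfl (fun i _ => hlc i)]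
  rw [Finset.sum_comm]
  unfold dN
  refine Finset.sum_le_sum (fun r hr => ?_)
  have hrh : r ≤ h := by have := Finset.mem_range.mp hr; omega
  have hind : ∀ i : Fin s,
      |ind (jel h F s hc i < r) - ind (jel h F' s hc' i < r)|
      = |ind ((i:ℤ) < F r) - ind ((i:ℤ) < F' r)| := by
    intro i
    rw [show ind (jel h F s hc i < r) = ind ((i:ℤ) < F r) from by
      unfold ind; rw [if_congr (jel_lt_iff hF hc hrh i) rfl rfl],
      show ind (jel h F' s hc' i < r) = ind ((i:ℤ) < F' r) from by
      unfold ind; rw [if_congr (jel_lt_iff hF' hc' hrh i) rfl rfl]]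
  rw [Finset.sum_congr rfl (fun i _ => hind i)]
  have hb : ∀ (K : ℕ → ℤ), IsSetCDF h (s:ℤ) K → 0 ≤ K r ∧ K r ≤ s := by
    intro K hK
    constructor
    · rw [← hK.zero]; exact hK.le_of_le (Nat.zero_le r)
    · rw [← hK.top h le_rfl]; exact hK.le_of_le hrh
  obtain ⟨h1, h2⟩ := hb F hF
  obtain ⟨h3, h4⟩ := hb F' hF'
  rw [Fin.sum_univ_eq_sum_range (fun n : ℕ => |ind ((n:ℤ) < F r) - ind ((n:ℤ) < F' r)|) s]
  rw [ind_sum_range s (F r) (F' r) h1 h2 h3 h4]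

end EMDBound

section PathG

variable {h : ℕ}

noncomputable def Gq (s : ℕ) (q : ℕ → ℕ → Fin h) (c : ℕ) : ℕ → ℤ := fun r =>
  (((Finset.range s).filter (fun i => ((q i c : ℕ)) < r)).card : ℤ)

lemma Gq_isMCDF (s : ℕ) (q : ℕ → ℕ → Fin h) (c : ℕ) : IsMCDF h (s:ℤ) (Gq s q c) := by
  refine ⟨?_, ?_, ?_⟩
  · simp [Gq]
  · intro r
    unfold Gq
    have : (Finset.range s).filter (fun i => ((q i c : ℕ)) < r)
        ⊆ (Finset.range s).filter (fun i => ((q i c : ℕ)) < r+1) := by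
      intro i hi
      obtain ⟨h1, h2⟩ := Finset.mem_filter.mp hi
      exact Finset.mem_filter.mpr ⟨h1, by omega⟩
    exact_mod_cast Finset.card_le_card this
  · intro r hr
    unfold Gq
    have : (Finset.range s).filter (fun i => ((q i c : ℕ)) < r) = Finset.range s := by
      refine Finset.filter_true_of_mem (fun i _ => ?_)
      have := (q i c).isLt
      omega
    rw [this, Finset.card_range]

lemma Gq_jump (s : ℕ) (q : ℕ → ℕ → Fin h) (c : ℕ) {i : ℕ} (hi : i < s) :
    Gq s q c ((q i c : ℕ)) < Gq s q c ((q i c : ℕ) + 1) := by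
  unfold Gq
  have hsub : (Finset.range s).filter (fun j => ((q j c : ℕ)) < (q i c : ℕ))
      ⊆ (Finset.range s).filter (fun j => ((q j c : ℕ)) < (q i c : ℕ) + 1) := by
    intro j hj
    obtain ⟨h1, h2⟩ := Finset.mem_filter.mp hj
    exact Finset.mem_filter.mpr ⟨h1, by omega⟩
  have hss : (Finset.range s).filter (fun j => ((q j c : ℕ)) < (q i c : ℕ))
      ⊂ (Finset.range s).filter (fun j => ((q j c : ℕ)) < (q i c : ℕ) + 1) := by
    refine (Finset.ssubset_iff_of_subset hsub).mpr ?_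
    exact ⟨i, Finset.mem_filter.mpr ⟨Finset.mem_range.mpr hi, by omega⟩,
      fun hmem => by have := (Finset.mem_filter.mp hmem).2; omega⟩
  exact_mod_cast Finset.card_lt_card hss

lemma Gq_dN_le (s : ℕ) (q : ℕ → ℕ → Fin h) (c c' : ℕ) :
    dN h (Gq s q c) (Gq s q c')
      ≤ ∑ i ∈ Finset.range s, ((((q i c : ℕ):ℤ) - ((q i c' : ℕ):ℤ)).natAbs : ℤ) := by
  have hcard : ∀ cc r, Gq s q cc r = ∑ i ∈ Finset.range s, ind ((q i cc : ℕ) < r) := by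
    intro cc r
    unfold Gq ind
    rw [Finset.card_filter]
    push_cast
    rfl
  unfold dN
  have hpt : ∀ r, |Gq s q c r - Gq s q c' r|
      ≤ ∑ i ∈ Finset.range s, |ind ((q i c : ℕ) < r) - ind ((q i c' : ℕ) < r)| := by
    intro r
    rw [hcard c r, hcard c' r, ← Finset.sum_sub_distrib]
    exact Finset.abs_sum_le_sum_abs _ _
  refine le_trans (Finset.sum_le_sum (fun r _ => hpt r)) ?_
  rw [Finset.sum_comm]
  refine le_of_eq (Finset.sum_congr rfl (fun i _ => ?_))
  exact (layercake h _ _ (q i c).isLt (q i c').isLt).symm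

end PathG

lemma part1 (h w s B : ℕ) (hw : 0 < w) (hs : s ≤ h) (q : ℕ → ℕ → Fin h)
    (hbud : ∀ i < s, pathEMD (q i) w ≤ B / (i + 1))
    (Hs : ℝ) (hHs : Hs = ∑ i ∈ Finset.range s, (1 : ℝ) / (i + 1))
    (Ω : Finset (Fin h × Fin w))
    (hΩ : Ω = (Finset.range s).biUnion (fun i => pathSupp (q i))) :
    ∃ Γ ∈ cemdModel h w s (⌈Hs⌉₊ * B), Ω ⊆ Γ := by
  obtain ⟨Fc, hGood, hchain⟩ := chain_main h w (s:ℤ) (by positivity) (by exact_mod_cast hs)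
    (fun c => Gq s q c) (fun c => Gq_isMCDF s q c)
  set Γ : Finset (Fin h × Fin w) :=
    Finset.univ.filter (fun rc => (rc.1 : ℕ) ∈ jset h (Fc (rc.2 : ℕ))) with hΓ
  have hcol : ∀ c : ℕ, c < w → colSupp Γ c = jset h (Fc c) := by
    intro c hc
    ext x
    unfold colSupp
    rw [Finset.mem_image]
    constructor
    · rintro ⟨rc, hrc, rfl⟩
      obtain ⟨hrc1, hrc2⟩ := Finset.mem_filter.mp hrc
      obtain ⟨_, hrc3⟩ := Finset.mem_filter.mp hrc1
      rwa [hrc2] at hrc3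
    · intro hx
      have hxh : x < h := (jset_mem.mp hx).1
      refine ⟨(⟨x, hxh⟩, ⟨c, hc⟩), ?_, rfl⟩
      refine Finset.mem_filter.mpr ⟨Finset.mem_filter.mpr ⟨Finset.mem_univ _, ?_⟩, rfl⟩
      exact hx
  have hcards : ∀ c, c < w → (jset h (Fc c)).card = s := by
    intro c hc
    have := jset_card (hGood c hc).1
    exact_mod_cast this
  -- the EMD bound
  have hemd : (suppEMD Γ : ℤ) ≤ ((⌈Hs⌉₊ * B : ℕ) : ℤ) := by
    have h1 : (suppEMD Γ : ℤ)
        = ∑ c ∈ Finset.range (w-1), (natEMD (jset h (Fc c)) (jset h (Fc (c+1))) : ℤ) := by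
      unfold suppEMD
      push_cast
      refine Finset.sum_congr rfl (fun c hc => ?_)
      have hcw := Finset.mem_range.mp hc
      rw [hcol c (by omega), hcol (c+1) (by omega)]
    have h2 : ∑ c ∈ Finset.range (w-1), (natEMD (jset h (Fc c)) (jset h (Fc (c+1))) : ℤ)
        ≤ ∑ c ∈ Finset.range (w-1), dN h (Fc c) (Fc (c+1)) := by
      refine Finset.sum_le_sum (fun c hc => ?_)
      have hcw := Finset.mem_range.mp hc
      exact natEMD_le_dN (hGood c (by omega)).1 (hGood (c+1) (by omega)).1
        (hcards c (by omega)) (hcards (c+1) (by omega))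
    have h3 : ∑ c ∈ Finset.range (w-1), dN h (Gq s q c) (Gq s q (c+1))
        ≤ ∑ c ∈ Finset.range (w-1), ∑ i ∈ Finset.range s,
            ((((q i c : ℕ):ℤ) - ((q i (c+1) : ℕ):ℤ)).natAbs : ℤ) :=
      Finset.sum_le_sum (fun c _ => Gq_dN_le s q c (c+1))
    have h4 : ∑ c ∈ Finset.range (w-1), ∑ i ∈ Finset.range s,
            ((((q i c : ℕ):ℤ) - ((q i (c+1) : ℕ):ℤ)).natAbs : ℤ)
        = ∑ i ∈ Finset.range s, ((pathEMD (q i) w : ℕ) : ℤ) := by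
      rw [Finset.sum_comm]
      refine Finset.sum_congr rfl (fun i _ => ?_)
      unfold pathEMD
      push_cast
      rfl
    have h5 : ∑ i ∈ Finset.range s, ((pathEMD (q i) w : ℕ) : ℤ)
        ≤ ∑ i ∈ Finset.range s, ((B / (i+1) : ℕ) : ℤ) := by
      refine Finset.sum_le_sum (fun i hi => ?_)
      have := hbud i (Finset.mem_range.mp hi)
      exact_mod_cast this
    have h6 : (∑ i ∈ Finset.range s, (B / (i+1) : ℕ)) ≤ ⌈Hs⌉₊ * B := by
      have hr : ((∑ i ∈ Finset.range s, (B / (i+1) : ℕ) : ℕ) : ℝ) ≤ ((⌈Hs⌉₊ * B : ℕ) : ℝ) := by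
        push_cast
        have e1 : ∀ i ∈ Finset.range s, ((B / (i+1) : ℕ) : ℝ) ≤ (B : ℝ) * (1 / ((i:ℝ)+1)) := by
          intro i _
          have := Nat.cast_div_le (m := B) (n := i+1) (α := ℝ)
          rw [mul_one_div]
          refine le_trans this ?_
          push_cast
          exact le_refl _
        refine le_trans (Finset.sum_le_sum e1) ?_
        rw [← Finset.mul_sum, ← hHs]
        have hB : (0:ℝ) ≤ B := by positivity
        calc (B:ℝ) * Hs ≤ (B:ℝ) * ⌈Hs⌉₊ := by
              refine mul_le_mul_of_nonneg_left (Nat.le_ceil Hs) hB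
          _ = (⌈Hs⌉₊ : ℝ) * B := by ring
      exact_mod_cast hr
    have h6' : (∑ i ∈ Finset.range s, ((B / (i+1) : ℕ) : ℤ)) ≤ ((⌈Hs⌉₊ * B : ℕ) : ℤ) := by
      rw [← Nat.cast_sum]
      exact_mod_cast h6
    calc (suppEMD Γ : ℤ) = _ := h1
      _ ≤ _ := h2
      _ ≤ _ := hchain
      _ ≤ _ := h3
      _ = _ := h4
      _ ≤ _ := h5
      _ ≤ _ := h6'
  refine ⟨Γ, ⟨?_, ?_⟩, ?_⟩
  · intro c hc
    rw [hcol c hc]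
    exact hcards c hc
  · exact_mod_cast hemd
  · rw [hΩ]
    intro p hp
    obtain ⟨i, hi, hmem⟩ := Finset.mem_biUnion.mp hp
    have his := Finset.mem_range.mp hi
    unfold pathSupp at hmem
    obtain ⟨j, _, hj⟩ := Finset.mem_image.mp hmem
    rw [← hj]
    refine Finset.mem_filter.mpr ⟨Finset.mem_univ _, ?_⟩
    refine jset_mem.mpr ⟨(q i (j:ℕ)).isLt, ?_⟩
    exact (hGood (j:ℕ) j.isLt).2 _ (Gq_jump s q (j:ℕ) his)

section Part2Paths

noncomputable def iterComp (f : ℕ → (ℕ → ℕ)) : ℕ → ℕ → ℕ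
  | 0 => id
  | (c+1) => f c ∘ iterComp f c

lemma natEMD_achieved (A B : Finset ℕ) (hA : A.card = B.card) :
    ∃ π : ℕ → ℕ, Set.BijOn π ↑A ↑B ∧
      (∑ a ∈ A, ((a : ℤ) - (π a : ℤ)).natAbs) = natEMD A B := by
  have hne : { d : ℕ | ∃ π : ℕ → ℕ, Set.BijOn π ↑A ↑B ∧
      d = ∑ a ∈ A, ((a : ℤ) - (π a : ℤ)).natAbs }.Nonempty := by
    set e := Finset.equivOfCardEq hA with he
    set π : ℕ → ℕ := fun x => if hx : x ∈ A then (e ⟨x, hx⟩ : ℕ) else x with hπ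
    refine ⟨_, π, ⟨?_, ?_, ?_⟩, rfl⟩
    · intro x hx
      have hx' : x ∈ A := hx
      simp only [hπ, dif_pos hx']
      exact (e ⟨x, hx'⟩).2
    · intro x hx y hy hxy
      have hx' : x ∈ A := hx
      have hy' : y ∈ A := hy
      simp only [hπ, dif_pos hx', dif_pos hy'] at hxy
      have := e.injective (Subtype.ext hxy)
      exact congrArg Subtype.val this
    · intro y hy
      have hy' : y ∈ B := hy
      refine ⟨(e.symm ⟨y, hy'⟩ : ℕ), (e.symm ⟨y, hy'⟩).2, ?_⟩
      simp only [hπ, dif_pos (e.symm ⟨y, hy'⟩).2]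
      have : (⟨(e.symm ⟨y, hy'⟩ : ℕ), (e.symm ⟨y, hy'⟩).2⟩ : {x // x ∈ A})
          = e.symm ⟨y, hy'⟩ := rfl
      rw [this, Equiv.apply_symm_apply]
  obtain ⟨π, hbij, hval⟩ := Nat.sInf_mem hne
  exact ⟨π, hbij, hval.symm⟩

lemma colSupp_lt_h {h w : ℕ} (Ω : Finset (Fin h × Fin w)) (c : ℕ) {x : ℕ}
    (hx : x ∈ colSupp Ω c) : x < h := by
  unfold colSupp at hx
  obtain ⟨rc, _, rfl⟩ := Finset.mem_image.mp hx
  exact rc.1.isLt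

lemma part2paths (h w s B : ℕ) (hw : 0 < w) (Γ : Finset (Fin h × Fin w))
    (hcards : ∀ c < w, (colSupp Γ c).card = s) (hemd : suppEMD Γ ≤ B) :
    ∃ P : Fin s → ℕ → Fin h,
      (∀ i : Fin s, pathEMD (P i) w ≤ B / ((i:ℕ) + 1)) ∧
      (∀ x ∈ Γ, ∃ j : Fin s, ∃ c : Fin w, ((P j (c:ℕ), c) : Fin h × Fin w) = x) ∧
      (∀ j j' : Fin s, ∀ c : Fin w, P j (c:ℕ) = P j' (c:ℕ) → j = j') := by
  -- optimal transport maps between consecutive columns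
  have hex : ∀ c : ℕ, ∃ f : ℕ → ℕ,
      (c < w - 1 → Set.BijOn f ↑(colSupp Γ c) ↑(colSupp Γ (c+1)) ∧
        (∑ a ∈ colSupp Γ c, ((a : ℤ) - (f a : ℤ)).natAbs)
          = natEMD (colSupp Γ c) (colSupp Γ (c+1))) := by
    intro c
    by_cases hc : c < w - 1
    · obtain ⟨f, hbij, hval⟩ := natEMD_achieved (colSupp Γ c) (colSupp Γ (c+1))
        (by rw [hcards c (by omega), hcards (c+1) (by omega)])
      exact ⟨f, fun _ => ⟨hbij, hval⟩⟩
    · exact ⟨id, fun hcc => absurd hcc hc⟩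
  choose f hf using hex
  set g : ℕ → ℕ → ℕ := iterComp f with hg
  have hg0 : g 0 = id := rfl
  have hgsucc : ∀ c, g (c+1) = f c ∘ g c := fun c => rfl
  -- g c is a bijection from column 0 onto column c, for c ≤ w-1
  have hgbij : ∀ c, c ≤ w - 1 → Set.BijOn (g c) ↑(colSupp Γ 0) ↑(colSupp Γ c) := by
    intro c
    induction c with
    | zero => intro _; rw [hg0]; exact Set.bijOn_id _
    | succ n ih =>
      intro hn
      rw [hgsucc n]
      exact Set.BijOn.comp ((hf n (by omega)).1) (ih (by omega))
  -- enumerate column 0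
  have hcard0 : (colSupp Γ 0).card = s := hcards 0 hw
  set a : Fin s → ℕ := fun j => ((colSupp Γ 0).orderIsoOfFin hcard0 j : ℕ) with ha
  have hamem : ∀ j, a j ∈ colSupp Γ 0 := fun j => ((colSupp Γ 0).orderIsoOfFin hcard0 j).2
  have hainj : Function.Injective a := by
    intro x y hxy
    exact ((colSupp Γ 0).orderIsoOfFin hcard0).injective (Subtype.ext hxy)
  have hasurj : ∀ y ∈ colSupp Γ 0, ∃ j, a j = y := by
    intro y hy
    obtain ⟨j, hj⟩ := ((colSupp Γ 0).orderIsoOfFin hcard0).surjective ⟨y, hy⟩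
    exact ⟨j, congrArg Subtype.val hj⟩
  -- raw paths
  have hmem : ∀ (j : Fin s) (c : ℕ), c ≤ w - 1 → g c (a j) ∈ colSupp Γ c := by
    intro j c hc
    exact (hgbij c hc).mapsTo (hamem j)
  have hlt : ∀ (j : Fin s) (c : ℕ), g (min c (w-1)) (a j) < h := by
    intro j c
    exact colSupp_lt_h Γ _ (hmem j _ (min_le_right _ _))
  set P0 : Fin s → ℕ → Fin h := fun j c => ⟨g (min c (w-1)) (a j), hlt j c⟩ with hP0
  -- total path EMD = suppEMD
  have hpe : ∀ j : Fin s, pathEMD (P0 j) w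
      = ∑ c ∈ Finset.range (w-1), (((g c (a j) : ℤ)) - ((g (c+1) (a j) : ℤ))).natAbs := by
    intro j
    unfold pathEMD
    refine Finset.sum_congr rfl (fun c hc => ?_)
    have hcw := Finset.mem_range.mp hc
    have e1 : min c (w-1) = c := by omega
    have e2 : min (c+1) (w-1) = c + 1 := by omega
    simp only [hP0, e1, e2]
  have htot : ∑ j : Fin s, pathEMD (P0 j) w = suppEMD Γ := by
    rw [Finset.sum_congr rfl (fun j _ => hpe j)]
    rw [Finset.sum_comm]
    unfold suppEMD
    refine Finset.sum_congr rfl (fun c hc => ?_)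
    have hcw := Finset.mem_range.mp hc
    rw [← (hf c hcw).2]
    -- reindex the sum over column c by the enumeration j ↦ g c (a j)
    rw [← Finset.sum_coe_sort (colSupp Γ c) (fun x => (((x:ℕ) : ℤ) - (f c (x:ℕ) : ℤ)).natAbs)]
    have hbij : Function.Bijective (fun j : Fin s =>
        (⟨g c (a j), hmem j c (by omega)⟩ : {x // x ∈ colSupp Γ c})) := by
      constructor
      · intro x y hxy
        have h1 : g c (a x) = g c (a y) := congrArg Subtype.val hxy
        have h2 := (hgbij c (by omega)).injOn (hamem x) (hamem y) h1
        exact hainj h2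
      · intro ⟨y, hy⟩
        obtain ⟨x, hx, hgx⟩ := (hgbij c (by omega)).surjOn hy
        obtain ⟨j, hj⟩ := hasurj x hx
        refine ⟨j, Subtype.ext ?_⟩
        show g c (a j) = y
        rw [hj]; exact hgx
    rw [← Function.Bijective.sum_comp hbij
      (fun x => (((x:ℕ) : ℤ) - (f c (x:ℕ) : ℤ)).natAbs)]
    refine Finset.sum_congr rfl (fun j _ => ?_)
    rw [hgsucc c]
    rfl
  -- each path EMD ≤ B, sorted assignment
  have hsum_le : ∑ j : Fin s, pathEMD (P0 j) w ≤ B := by rw [htot]; exact hemd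
  set e : Fin s → ℕ := fun j => pathEMD (P0 j) w with hev
  set σ := Tuple.sort e with hσ
  have hmono : Monotone (e ∘ σ) := Tuple.monotone_sort e
  have hρlt : ∀ i : Fin s, s - 1 - (i:ℕ) < s := fun i => by omega
  set ρ : Fin s → Fin s := fun i => ⟨s - 1 - (i:ℕ), hρlt i⟩ with hρ
  have hρinj : Function.Injective ρ := by
    intro x y hxy
    have := congrArg Fin.val hxy
    simp only [hρ] at this
    have hx := x.isLt
    have hy := y.isLt
    exact Fin.ext (by omega)
  set τ : Fin s → Fin s := fun i => σ (ρ i) with hτ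
  have hτinj : Function.Injective τ := fun x y hxy => hρinj (σ.injective hxy)
  have hτbij : Function.Bijective τ := (Finite.injective_iff_bijective).mp hτinj
  -- feasibility of sorted paths
  have hfeas : ∀ i : Fin s, ((i:ℕ) + 1) * e (τ i) ≤ B := by
    intro i
    -- the i+1 largest values all ≥ e (τ i)
    have hgeq : ∀ l : Fin s, (ρ i : ℕ) ≤ (l : ℕ) → e (τ i) ≤ e (σ l) := by
      intro l hl
      exact hmono (show ρ i ≤ l from hl)
    have hcount : (Finset.univ.filter (fun l : Fin s => (ρ i : ℕ) ≤ (l:ℕ))).card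
        = (i:ℕ) + 1 := by
      rw [Finset.card_filter]
      rw [Fin.sum_univ_eq_sum_range (fun n => if (ρ i : ℕ) ≤ n then 1 else 0) s]
      rw [← Finset.card_filter]
      have : (Finset.range s).filter (fun n => (ρ i : ℕ) ≤ n) = Finset.Ico ((ρ i : ℕ)) s := by
        ext n; simp [Finset.mem_filter, Finset.mem_range, Finset.mem_Ico]; omega
      rw [this, Nat.card_Ico]
      have := i.isLt
      simp only [hρ]
      omega
    calc ((i:ℕ) + 1) * e (τ i)
        = ∑ _l ∈ Finset.univ.filter (fun l : Fin s => (ρ i : ℕ) ≤ (l:ℕ)), e (τ i) := by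
          rw [Finset.sum_const, hcount, smul_eq_mul]
      _ ≤ ∑ l ∈ Finset.univ.filter (fun l : Fin s => (ρ i : ℕ) ≤ (l:ℕ)), e (σ l) :=
          Finset.sum_le_sum (fun l hl => hgeq l (Finset.mem_filter.mp hl).2)
      _ ≤ ∑ l : Fin s, e (σ l) :=
          Finset.sum_le_sum_of_subset (Finset.filter_subset _ _)
      _ = ∑ j : Fin s, e j := Equiv.sum_comp σ e
      _ ≤ B := hsum_le
  refine ⟨fun i => P0 (τ i), ?_, ?_, ?_⟩
  · intro i
    rw [Nat.le_div_iff_mul_le (by omega)]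
    have := hfeas i
    calc pathEMD (P0 (τ i)) w * ((i:ℕ)+1) = ((i:ℕ)+1) * e (τ i) := by rw [hev]; ring
      _ ≤ B := hfeas i
  · -- cover
    rintro ⟨r, c⟩ hx
    have hrc : (r : ℕ) ∈ colSupp Γ (c : ℕ) := by
      unfold colSupp
      exact Finset.mem_image.mpr ⟨(r, c), Finset.mem_filter.mpr ⟨hx, rfl⟩, rfl⟩
    have hcw : (c:ℕ) ≤ w - 1 := by have := c.isLt; omega
    obtain ⟨x, hx0, hgx⟩ := (hgbij (c:ℕ) hcw).surjOn hrc
    obtain ⟨j0, hj0⟩ := hasurj x hx0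
    obtain ⟨i, hi⟩ := hτbij.surjective j0
    refine ⟨i, c, ?_⟩
    have heq : P0 (τ i) (c:ℕ) = r := by
      refine Fin.ext ?_
      show g (min (c:ℕ) (w-1)) (a (τ i)) = (r:ℕ)
      rw [min_eq_left hcw, hi, hj0]
      exact hgx
    show ((P0 (τ i) (c:ℕ) : Fin h), c) = (r, c)
    rw [heq]
  · -- disjoint
    intro j j' c hc
    have h1 : g (min (c:ℕ) (w-1)) (a (τ j)) = g (min (c:ℕ) (w-1)) (a (τ j')) :=
      congrArg Fin.val hc
    have hcw : min (c:ℕ) (w-1) ≤ w - 1 := min_le_right _ _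
    have h2 := (hgbij _ hcw).injOn (hamem (τ j)) (hamem (τ j')) h1
    exact hτinj (hainj h2)

end Part2Paths

section Analytic

variable {h w : ℕ}

noncomputable def wt (p : ℝ) (X : Matrix (Fin h) (Fin w) ℝ) (S : Finset (Fin h × Fin w)) : ℝ :=
  ∑ x ∈ S, |X x.1 x.2| ^ p

lemma wt_nonneg (p : ℝ) (X : Matrix (Fin h) (Fin w) ℝ) (S : Finset (Fin h × Fin w)) :
    0 ≤ wt p X S :=
  Finset.sum_nonneg (fun x _ => Real.rpow_nonneg (abs_nonneg _) _)

lemma wt_mono (p : ℝ) (X : Matrix (Fin h) (Fin w) ℝ) {S T : Finset (Fin h × Fin w)}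
    (hST : S ⊆ T) : wt p X S ≤ wt p X T :=
  Finset.sum_le_sum_of_subset_of_nonneg hST
    (fun x _ _ => Real.rpow_nonneg (abs_nonneg _) _)

lemma wt_union_le (p : ℝ) (X : Matrix (Fin h) (Fin w) ℝ) (S T : Finset (Fin h × Fin w)) :
    wt p X (S ∪ T) ≤ wt p X S + wt p X T := by
  have h1 : S ∪ T = S ∪ (T \ S) := (Finset.union_sdiff_self_eq_union).symm
  rw [h1]
  unfold wt
  rw [Finset.sum_union Finset.disjoint_sdiff]
  have := wt_mono p X (Finset.sdiff_subset (s := T) (t := S))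
  unfold wt at this
  linarith

lemma wt_union_eq (p : ℝ) (X : Matrix (Fin h) (Fin w) ℝ) (S T : Finset (Fin h × Fin w)) :
    wt p X (T ∪ S) = wt p X S + wt p X (T \ S) := by
  have h1 : T ∪ S = S ∪ (T \ S) := by
    rw [Finset.union_sdiff_self_eq_union, Finset.union_comm]
  rw [h1]
  unfold wt
  rw [Finset.sum_union Finset.disjoint_sdiff]

lemma wt_biUnion_le {ι : Type*} [DecidableEq ι] (p : ℝ) (X : Matrix (Fin h) (Fin w) ℝ)
    (u : Finset ι) (t : ι → Finset (Fin h × Fin w)) :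
    wt p X (u.biUnion t) ≤ ∑ j ∈ u, wt p X (t j) := by
  induction u using Finset.induction with
  | empty => simp [wt]
  | @insert a u ha ih =>
    rw [Finset.biUnion_insert, Finset.sum_insert ha]
    calc wt p X (t a ∪ u.biUnion t) ≤ wt p X (t a) + wt p X (u.biUnion t) :=
          wt_union_le p X _ _
      _ ≤ wt p X (t a) + ∑ j ∈ u, wt p X (t j) := by linarith

lemma matnorm_pow (p : ℝ) (hp : 1 ≤ p) (X : Matrix (Fin h) (Fin w) ℝ)
    (S : Finset (Fin h × Fin w)) :
    matLpNorm p (matRestrict X S) ^ p = wt p X S := by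
  have hp0 : p ≠ 0 := by linarith
  have hsummand : ∀ r c, |matRestrict X S r c| ^ p
      = if (r, c) ∈ S then |X r c| ^ p else 0 := by
    intro r c
    show |(if (r, c) ∈ S then X r c else 0 : ℝ)| ^ p = _
    split_ifs with hc
    · rfl
    · rw [abs_zero, Real.zero_rpow hp0]
  have hT : (∑ r, ∑ c, |matRestrict X S r c| ^ p) = wt p X S := by
    simp_rw [hsummand]
    rw [← Fintype.sum_prod_type (f := fun x : Fin h × Fin w =>
      if (x.1, x.2) ∈ S then |X x.1 x.2| ^ p else 0)]
    have : ∀ x : Fin h × Fin w, (if (x.1, x.2) ∈ S then |X x.1 x.2| ^ p else 0)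
        = (if x ∈ S then |X x.1 x.2| ^ p else 0) := fun x => rfl
    simp_rw [this]
    rw [Finset.sum_ite_mem Finset.univ S (fun x => |X x.1 x.2| ^ p), Finset.univ_inter]
    rfl
  have hTnn : 0 ≤ ∑ r, ∑ c, |matRestrict X S r c| ^ p :=
    Finset.sum_nonneg (fun r _ => Finset.sum_nonneg
      (fun c _ => Real.rpow_nonneg (abs_nonneg _) _))
  unfold matLpNorm
  rw [← Real.rpow_mul hTnn, one_div_mul_cancel hp0, Real.rpow_one, hT]

end Analytic

section Part2Main

variable {h w : ℕ}

lemma pathSupp_sum (q' : ℕ → Fin h) (f : Fin h × Fin w → ℝ) :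
    ∑ x ∈ (pathSupp q' : Finset (Fin h × Fin w)), f x = ∑ j : Fin w, f (q' (j:ℕ), j) := by
  unfold pathSupp
  rw [Finset.sum_image]
  intro a _ b _ hab
  exact congrArg Prod.snd hab

lemma pathWeight_inter (p : ℝ) (X : Matrix (Fin h) (Fin w) ℝ) (q' : ℕ → Fin h)
    (M : Finset (Fin h × Fin w)) :
    ∑ j : Fin w, (if ((q' (j:ℕ) : Fin h), j) ∈ M then |X (q' (j:ℕ)) j| ^ p else 0)
      = wt p X ((pathSupp q' : Finset (Fin h × Fin w)) ∩ M) := by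
  unfold wt
  rw [← Finset.filter_mem_eq_inter, Finset.sum_filter, pathSupp_sum q'
    (fun x => if x ∈ M then |X x.1 x.2| ^ p else 0)]

lemma pathWeight_sdiff (p : ℝ) (X : Matrix (Fin h) (Fin w) ℝ) (q' : ℕ → Fin h)
    (M : Finset (Fin h × Fin w)) :
    ∑ j : Fin w, (if ((q' (j:ℕ) : Fin h), j) ∈ M then 0 else |X (q' (j:ℕ)) j| ^ p)
      = wt p X ((pathSupp q' : Finset (Fin h × Fin w)) \ M) := by
  unfold wt
  rw [Finset.sdiff_eq_filter, Finset.sum_filter, pathSupp_sum q'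
    (fun x => if x ∉ M then |X x.1 x.2| ^ p else 0)]
  refine Finset.sum_congr rfl (fun j _ => ?_)
  by_cases hm : ((q' (j:ℕ) : Fin h), j) ∈ M
  · rw [if_pos hm, if_neg (by simp [hm])]
  · rw [if_neg hm, if_pos (by simp [hm])]

lemma part2main (h w s B : ℕ) (p : ℝ) (hp : 1 ≤ p) (hw : 0 < w)
    (X : Matrix (Fin h) (Fin w) ℝ)
    (Xs : ℕ → Matrix (Fin h) (Fin w) ℝ) (hXs0 : Xs 0 = X)
    (q : ℕ → ℕ → Fin h)
    (hmax : ∀ i < s, ∀ q' : ℕ → Fin h, pathEMD q' w ≤ B / (i + 1) →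
      pathWeight p (Xs i) q' ≤ pathWeight p (Xs i) (q i))
    (hXs : ∀ i r c, Xs (i + 1) r c =
      if (r, c) ∈ (pathSupp (q i) : Finset (Fin h × Fin w)) then 0 else Xs i r c)
    (Ω : Finset (Fin h × Fin w))
    (hΩ : Ω = (Finset.range s).biUnion (fun i => pathSupp (q i)))
    (Γ : Finset (Fin h × Fin w)) (hΓ : Γ ∈ cemdModel h w s B) :
    matLpNorm p (matRestrict X Ω) ^ p ≥ (1 / 4) * matLpNorm p (matRestrict X Γ) ^ p := by
  have hp0 : p ≠ 0 := by linarith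
  obtain ⟨hΓcard, hΓemd⟩ := hΓ
  set Op : ℕ → Finset (Fin h × Fin w) :=
    fun i => (Finset.range i).biUnion (fun l => pathSupp (q l)) with hOp
  have hOpmem : ∀ i x, x ∈ Op i ↔ ∃ l < i, x ∈ (pathSupp (q l) : Finset (Fin h × Fin w)) := by
    intro i x
    simp [hOp, Finset.mem_biUnion]
  have hXsform : ∀ i r c, Xs i r c = if (r, c) ∈ Op i then 0 else X r c := by
    intro i
    induction i with
    | zero =>
      intro r c
      rw [hXs0, if_neg]
      rw [hOpmem]
      rintro ⟨l, hl, _⟩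
      omega
    | succ n ih =>
      intro r c
      rw [hXs n r c]
      by_cases hmem : (r, c) ∈ (pathSupp (q n) : Finset (Fin h × Fin w))
      · rw [if_pos hmem, if_pos ((hOpmem (n+1) (r,c)).mpr ⟨n, by omega, hmem⟩)]
      · rw [if_neg hmem, ih r c]
        by_cases hmem2 : (r, c) ∈ Op n
        · obtain ⟨l, hl, hx⟩ := (hOpmem n (r,c)).mp hmem2
          rw [if_pos hmem2, if_pos ((hOpmem (n+1) (r,c)).mpr ⟨l, by omega, hx⟩)]
        · rw [if_neg hmem2, if_neg]
          rw [hOpmem]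
          rintro ⟨l, hl, hx⟩
          rcases Nat.lt_or_ge l n with hln | hln
          · exact hmem2 ((hOpmem n (r,c)).mpr ⟨l, hln, hx⟩)
          · have : l = n := by omega
            rw [this] at hx
            exact hmem hx
  have hOpsub : ∀ i, i ≤ s → Op i ⊆ Ω := by
    intro i hi
    rw [hΩ]
    intro x hx
    obtain ⟨l, hl, hx⟩ := (hOpmem i x).mp hx
    exact Finset.mem_biUnion.mpr ⟨l, Finset.mem_range.mpr (by omega), hx⟩
  -- the collected weight identity
  have hcollect : ∀ m, m ≤ s →
      ∑ i ∈ Finset.range m, pathWeight p (Xs i) (q i) = wt p X (Op m) := by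
    intro m
    induction m with
    | zero => intro _; simp [hOp, wt]
    | succ n ih =>
      intro hn
      rw [Finset.sum_range_succ, ih (by omega)]
      have hstep : pathWeight p (Xs n) (q n)
          = wt p X ((pathSupp (q n) : Finset (Fin h × Fin w)) \ Op n) := by
        rw [← pathWeight_sdiff p X (q n) (Op n)]
        unfold pathWeight
        refine Finset.sum_congr rfl (fun j _ => ?_)
        rw [hXsform n]
        by_cases hm : ((q n (j:ℕ) : Fin h), j) ∈ Op n
        · rw [if_pos hm, if_pos hm, abs_zero, Real.zero_rpow hp0]
        · rw [if_neg hm, if_neg hm]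
      rw [hstep]
      have hsucc : Op (n+1) = (pathSupp (q n) : Finset (Fin h × Fin w)) ∪ Op n := by
        rw [hOp]
        simp only
        rw [Finset.range_add_one, Finset.biUnion_insert]
      rw [hsucc, wt_union_eq]
  have hAeq : ∑ i ∈ Finset.range s, pathWeight p (Xs i) (q i) = wt p X Ω := by
    rw [hcollect s le_rfl, hΩ]
  -- decompose Γ into sorted disjoint paths
  obtain ⟨P, hPbud, hPcover, hPdisj⟩ := part2paths h w s B hw Γ hΓcard hΓemd
  -- per step bound
  have hstepbd : ∀ i : Fin s, pathWeight p (Xs (i:ℕ)) (q (i:ℕ))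
      ≥ wt p X (pathSupp (P i)) - wt p X ((pathSupp (P i) : Finset (Fin h × Fin w)) ∩ Ω) := by
    intro i
    have w1 : pathWeight p (Xs (i:ℕ)) (P i) ≤ pathWeight p (Xs (i:ℕ)) (q (i:ℕ)) :=
      hmax (i:ℕ) i.isLt (P i) (hPbud i)
    have w2 : pathWeight p (Xs (i:ℕ)) (P i)
        ≥ wt p X (pathSupp (P i)) - wt p X ((pathSupp (P i) : Finset (Fin h × Fin w)) ∩ Ω) := by
      have hterm : ∀ j : Fin w, |Xs (i:ℕ) (P i (j:ℕ)) j| ^ p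
          ≥ |X (P i (j:ℕ)) j| ^ p
            - (if ((P i (j:ℕ) : Fin h), j) ∈ Ω then |X (P i (j:ℕ)) j| ^ p else 0) := by
        intro j
        rw [hXsform (i:ℕ)]
        by_cases hm : ((P i (j:ℕ) : Fin h), j) ∈ Op (i:ℕ)
        · have hmΩ : ((P i (j:ℕ) : Fin h), j) ∈ Ω := hOpsub (i:ℕ) (le_of_lt i.isLt) hm
          rw [if_pos hm, if_pos hmΩ, abs_zero, Real.zero_rpow hp0]
          linarith
        · rw [if_neg hm]
          have : (0:ℝ) ≤ (if ((P i (j:ℕ) : Fin h), j) ∈ Ω then |X (P i (j:ℕ)) j| ^ p else 0) := by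
            split_ifs
            · exact Real.rpow_nonneg (abs_nonneg _) _
            · exact le_refl 0
          linarith
      have hsum := Finset.sum_le_sum (fun j (_ : j ∈ (Finset.univ : Finset (Fin w))) => hterm j)
      rw [Finset.sum_sub_distrib] at hsum
      rw [pathWeight_inter p X (P i) Ω] at hsum
      have hps : ∑ j : Fin w, |X (P i (j:ℕ)) j| ^ p = wt p X (pathSupp (P i)) := by
        unfold wt
        rw [pathSupp_sum (P i) (fun x => |X x.1 x.2| ^ p)]
      rw [hps] at hsum
      exact hsum
    linarith
  -- sum the bounds
  have hsum1 : ∑ i ∈ Finset.range s, pathWeight p (Xs i) (q i)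
      = ∑ i : Fin s, pathWeight p (Xs (i:ℕ)) (q (i:ℕ)) :=
    (Fin.sum_univ_eq_sum_range (fun n => pathWeight p (Xs n) (q n)) s).symm
  have hbd2 : ∑ i : Fin s, pathWeight p (Xs (i:ℕ)) (q (i:ℕ))
      ≥ ∑ i : Fin s, wt p X (pathSupp (P i))
        - ∑ i : Fin s, wt p X ((pathSupp (P i) : Finset (Fin h × Fin w)) ∩ Ω) := by
    rw [← Finset.sum_sub_distrib]
    exact Finset.sum_le_sum (fun i _ => by have := hstepbd i; linarith)
  -- cover bound
  have hΓsub : Γ ⊆ Finset.univ.biUnion (fun i : Fin s => (pathSupp (P i) : Finset (Fin h × Fin w))) := by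
    intro x hx
    obtain ⟨j, c, hjc⟩ := hPcover x hx
    refine Finset.mem_biUnion.mpr ⟨j, Finset.mem_univ _, ?_⟩
    rw [← hjc]
    exact Finset.mem_image.mpr ⟨c, Finset.mem_univ _, rfl⟩
  have hcover : wt p X Γ ≤ ∑ i : Fin s, wt p X (pathSupp (P i)) :=
    le_trans (wt_mono p X hΓsub) (wt_biUnion_le p X Finset.univ _)
  -- disjointness bound
  have hdisj : ((Finset.univ : Finset (Fin s)) : Set (Fin s)).PairwiseDisjoint
      (fun i : Fin s => (pathSupp (P i) : Finset (Fin h × Fin w)) ∩ Ω) := by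
    intro a _ b _ hab
    refine Finset.disjoint_left.mpr ?_
    intro x hxa hxb
    obtain ⟨hxa1, _⟩ := Finset.mem_inter.mp hxa
    obtain ⟨hxb1, _⟩ := Finset.mem_inter.mp hxb
    obtain ⟨ca, _, hca⟩ := Finset.mem_image.mp hxa1
    obtain ⟨cb, _, hcb⟩ := Finset.mem_image.mp hxb1
    rw [← hca] at hcb
    have hc2 : cb = ca := congrArg Prod.snd hcb
    rw [hc2] at hcb
    have hc1 : P b (ca:ℕ) = P a (ca:ℕ) := congrArg Prod.fst hcb
    exact hab (hPdisj a b ca hc1.symm)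
  have hdisjbd : ∑ i : Fin s, wt p X ((pathSupp (P i) : Finset (Fin h × Fin w)) ∩ Ω)
      ≤ wt p X Ω := by
    have heq : ∑ i : Fin s, wt p X ((pathSupp (P i) : Finset (Fin h × Fin w)) ∩ Ω)
        = wt p X (Finset.univ.biUnion
            (fun i : Fin s => (pathSupp (P i) : Finset (Fin h × Fin w)) ∩ Ω)) := by
      unfold wt
      rw [Finset.sum_biUnion hdisj]
    rw [heq]
    refine wt_mono p X ?_
    intro x hx
    obtain ⟨i, _, hxi⟩ := Finset.mem_biUnion.mp hx
    exact (Finset.mem_inter.mp hxi).2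
  -- combine
  rw [matnorm_pow p hp X Ω, matnorm_pow p hp X Γ]
  have hΩnn := wt_nonneg p X Ω
  have hΓnn := wt_nonneg p X Γ
  have hfinal : wt p X Ω ≥ wt p X Γ - wt p X Ω := by
    have := hbd2
    rw [← hsum1, hAeq] at this
    linarith
  linarith

end Part2Main

end Stmt11

theorem stmt11 (h w s B k : ℕ) (p : ℝ) (hp : 1 ≤ p)
    (hw : 0 < w) (hk : k = s * w) (hs : s ≤ h)
    (X : Matrix (Fin h) (Fin w) ℝ)
    (Hs : ℝ) (hHs : Hs = ∑ i ∈ Finset.range s, (1 : ℝ) / (i + 1))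
    (Xs : ℕ → Matrix (Fin h) (Fin w) ℝ) (hXs0 : Xs 0 = X)
    (q : ℕ → ℕ → Fin h)
    (hbudget : ∀ i < s, pathEMD (q i) w ≤ B / (i + 1))
    (hmax : ∀ i < s, ∀ q' : ℕ → Fin h, pathEMD q' w ≤ B / (i + 1) →
      pathWeight p (Xs i) q' ≤ pathWeight p (Xs i) (q i))
    (hXs : ∀ i r c, Xs (i + 1) r c =
      if (r, c) ∈ (pathSupp (q i) : Finset (Fin h × Fin w)) then 0 else Xs i r c)
    (Ω : Finset (Fin h × Fin w))
    (hΩ : Ω = (Finset.range s).biUnion (fun i => pathSupp (q i))) :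
    (∃ Γ ∈ cemdModel h w s (⌈Hs⌉₊ * B), Ω ⊆ Γ) ∧
    ∀ Γ ∈ cemdModel h w s B,
      matLpNorm p (matRestrict X Ω) ^ p ≥ (1 / 4) * matLpNorm p (matRestrict X Γ) ^ p := by
  constructor
  · exact Stmt11.part1 h w s B hw hs q hbudget Hs hHs Ω hΩ
  · intro Γ hΓ
    exact Stmt11.part2main h w s B p hp hw X Xs hXs0 q hmax hXs Ω hΩ Γ hΓ
end

section
/- Let X ∈ ℝ^{h×w} with X ≠ 0, let p ≥ 1, let k be a multiple of w with s = k/w ≤ h, and let B ∈ ℕ. Suppose supp(X) ∈ 𝕄⁺_{k,B}. Let x_min = min{|X_{ij}|^p : X_{ij} ≠ 0} and λ₀ = x_min/(2wh²). Suppose Ω is a support with exactly s entries in every column that minimizes ‖X − X_Γ‖_p^p + λ₀·EMD(Γ) over all supports Γ with exactly s entries in every column. Then ‖X − X_Ω‖_p = 0 and EMD(Ω) ≤ B (hence Ω ∈ 𝕄_{k,B}). -/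
lemma natEMD_le_of_lt (h : ℕ) (A B : Finset ℕ) (hA : ∀ a ∈ A, a < h)
    (hB : ∀ b ∈ B, b < h) (hcard : A.card = B.card) :
    natEMD A B ≤ A.card * (2 * h) := by
  classical
  have e : A ≃ B := Finset.equivOfCardEq hcard
  set π : ℕ → ℕ := fun a => if ha : a ∈ A then ((e ⟨a, ha⟩ : ℕ)) else a with hπ
  have hmapsto : ∀ a ∈ A, π a ∈ B := by
    intro a ha
    simp only [hπ, dif_pos ha]
    exact (e ⟨a, ha⟩).2
  have hbij : Set.BijOn π ↑A ↑B := by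
    refine ⟨fun a ha => hmapsto a ha, ?_, ?_⟩
    · intro a ha a' ha' heq
      simp only [Finset.mem_coe] at ha ha'
      simp only [hπ, dif_pos ha, dif_pos ha'] at heq
      have : e ⟨a, ha⟩ = e ⟨a', ha'⟩ := Subtype.ext heq
      exact congrArg Subtype.val (e.injective this)
    · intro b hb
      simp only [Finset.mem_coe] at hb
      refine ⟨(e.symm ⟨b, hb⟩ : ℕ), (e.symm ⟨b, hb⟩).2, ?_⟩
      simp only [hπ, dif_pos (e.symm ⟨b, hb⟩).2]
      rw [show (⟨(e.symm ⟨b, hb⟩ : ℕ), (e.symm ⟨b, hb⟩).2⟩ : {x // x ∈ A}) = e.symm ⟨b, hb⟩ from rfl]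
      simp
  have hmem : (∑ a ∈ A, ((a : ℤ) - (π a : ℤ)).natAbs) ∈
      { d : ℕ | ∃ π : ℕ → ℕ, Set.BijOn π ↑A ↑B ∧
        d = ∑ a ∈ A, ((a : ℤ) - (π a : ℤ)).natAbs } := ⟨π, hbij, rfl⟩
  calc natEMD A B ≤ ∑ a ∈ A, ((a : ℤ) - (π a : ℤ)).natAbs := Nat.sInf_le hmem
    _ ≤ ∑ _a ∈ A, 2 * h := by
        refine Finset.sum_le_sum fun a ha => ?_
        have h1 : a < h := hA a ha
        have h2 : π a < h := hB _ (hmapsto a ha)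
        have := Int.natAbs_sub_le (a : ℤ) (π a : ℤ)
        simp only [Int.natAbs_natCast] at this
        omega
    _ = A.card * (2 * h) := by simp [Finset.sum_const, mul_comm]

lemma colSupp_lt {h w : ℕ} (Ω : Finset (Fin h × Fin w)) (c : ℕ) :
    ∀ a ∈ colSupp Ω c, a < h := by
  intro a ha
  simp only [colSupp, Finset.mem_image, Finset.mem_filter] at ha
  obtain ⟨q, _, rfl⟩ := ha
  exact q.1.2

lemma suppEMD_le {h w s : ℕ} (Ω : Finset (Fin h × Fin w))
    (hcol : ∀ c < w, (colSupp Ω c).card = s) (hs : s ≤ h) :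
    suppEMD Ω ≤ (w - 1) * (2 * h * h) := by
  unfold suppEMD
  calc ∑ c ∈ Finset.range (w - 1), natEMD (colSupp Ω c) (colSupp Ω (c + 1))
      ≤ ∑ _c ∈ Finset.range (w - 1), 2 * h * h := by
        refine Finset.sum_le_sum fun c hc => ?_
        rw [Finset.mem_range] at hc
        have h1 : c < w := by omega
        have h2 : c + 1 < w := by omega
        have := natEMD_le_of_lt h (colSupp Ω c) (colSupp Ω (c + 1))
          (colSupp_lt Ω c) (colSupp_lt Ω (c + 1))
          (by rw [hcol c h1, hcol (c + 1) h2])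
        rw [hcol c h1] at this
        calc natEMD (colSupp Ω c) (colSupp Ω (c+1)) ≤ s * (2 * h) := this
          _ ≤ h * (2 * h) := Nat.mul_le_mul_right _ hs
          _ = 2 * h * h := by ring
    _ = (w - 1) * (2 * h * h) := by simp [Finset.sum_const]

theorem stmt12 (h w s B k : ℕ) (p : ℝ) (hp : 1 ≤ p) (hk : k = s * w) (hs : s ≤ h)
    (X : Matrix (Fin h) (Fin w) ℝ) (hX : X ≠ 0)
    (hsupp : ∃ Γ ∈ cemdModel h w s B,
      {rc : Fin h × Fin w | X rc.1 rc.2 ≠ 0} ⊆ ↑Γ)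
    (xmin : ℝ) (hxmin : xmin = sInf {v : ℝ | ∃ r c, X r c ≠ 0 ∧ v = |X r c| ^ p})
    (lam : ℝ) (hlam : lam = xmin / (2 * w * h ^ 2))
    (Ω : Finset (Fin h × Fin w))
    (hcol : ∀ c < w, (colSupp Ω c).card = s)
    (hmin : ∀ Γ : Finset (Fin h × Fin w), (∀ c < w, (colSupp Γ c).card = s) →
      matLpNorm p (X - matRestrict X Ω) ^ p + lam * suppEMD Ω ≤
        matLpNorm p (X - matRestrict X Γ) ^ p + lam * suppEMD Γ) :
    matLpNorm p (X - matRestrict X Ω) = 0 ∧ suppEMD Ω ≤ B := by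
  classical
  have hp0 : p ≠ 0 := by positivity
  have hppos : (0:ℝ) < p := by linarith
  -- nonzero entry exists
  have hne : ∃ r c, X r c ≠ 0 := by
    by_contra h'
    push_neg at h'
    exact hX (by ext r c; simp [h' r c])
  obtain ⟨r0, c0, hr0⟩ := hne
  have hh : 0 < h := Fin.pos r0
  have hw : 0 < w := Fin.pos c0
  -- the set for xmin
  set V : Set ℝ := {v : ℝ | ∃ r c, X r c ≠ 0 ∧ v = |X r c| ^ p} with hV
  have hVne : V.Nonempty := ⟨|X r0 c0| ^ p, r0, c0, hr0, rfl⟩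
  have hVfin : V.Finite := by
    apply Set.Finite.subset (Set.finite_range
      (fun rc : Fin h × Fin w => |X rc.1 rc.2| ^ p))
    rintro v ⟨r, c, _, rfl⟩
    exact ⟨(r, c), rfl⟩
  have hVbdd : BddBelow V := hVfin.bddBelow
  have hxmem : xmin ∈ V := hxmin ▸ hVne.csInf_mem hVfin
  have hxpos : 0 < xmin := by
    obtain ⟨r, c, hrc, hv⟩ := hxmem
    rw [hv]
    exact Real.rpow_pos_of_pos (abs_pos.mpr hrc) p
  have hxle : ∀ r c, X r c ≠ 0 → xmin ≤ |X r c| ^ p := by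
    intro r c hrc
    rw [hxmin]
    exact csInf_le hVbdd ⟨r, c, hrc, rfl⟩
  -- denominator
  have hden : (0:ℝ) < 2 * w * h ^ 2 := by positivity
  have hlampos : 0 < lam := by rw [hlam]; positivity
  -- norm ^ p = sum
  have hnormpow : ∀ Y : Matrix (Fin h) (Fin w) ℝ,
      matLpNorm p Y ^ p = ∑ r, ∑ c, |Y r c| ^ p := by
    intro Y
    have hS : (0:ℝ) ≤ ∑ r, ∑ c, |Y r c| ^ p :=
      Finset.sum_nonneg fun r _ => Finset.sum_nonneg fun c _ =>
        Real.rpow_nonneg (abs_nonneg _) p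
    rw [matLpNorm, ← Real.rpow_mul hS, one_div_mul_cancel hp0, Real.rpow_one]
  -- the promised support
  obtain ⟨Γ, ⟨hΓcol, hΓemd⟩, hΓsub⟩ := hsupp
  -- X restricted to Γ equals X
  have hXΓ : X - matRestrict X Γ = 0 := by
    ext r c
    simp only [Matrix.sub_apply, matRestrict, Matrix.of_apply, Matrix.zero_apply]
    by_cases hmemΓ : (r, c) ∈ Γ
    · simp [hmemΓ]
    · simp only [if_neg hmemΓ, sub_zero]
      by_contra hne0
      exact hmemΓ (hΓsub (show ((r,c) : Fin h × Fin w) ∈ {rc | X rc.1 rc.2 ≠ 0} from hne0))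
  have hΓnorm : matLpNorm p (X - matRestrict X Γ) ^ p = 0 := by
    rw [hnormpow, hXΓ]
    simp [Real.zero_rpow hp0]
  -- main inequality
  have hkey := hmin Γ hΓcol
  rw [hΓnorm, zero_add] at hkey
  set SΩ := matLpNorm p (X - matRestrict X Ω) ^ p with hSΩ
  have hSΩval : SΩ = ∑ r, ∑ c, |(X - matRestrict X Ω) r c| ^ p := hnormpow _
  have hSΩnn : 0 ≤ SΩ := by
    rw [hSΩval]
    exact Finset.sum_nonneg fun r _ => Finset.sum_nonneg fun c _ =>
      Real.rpow_nonneg (abs_nonneg _) p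
  -- EMD bound for Γ
  have hΓbound : (suppEMD Γ : ℝ) < 2 * w * h ^ 2 := by
    have h1 : suppEMD Γ ≤ (w - 1) * (2 * h * h) := suppEMD_le Γ hΓcol hs
    have h2 : (w - 1) * (2 * h * h) < 2 * w * h ^ 2 := by
      have : (w - 1) * (2 * h * h) < w * (2 * h * h) := by
        apply Nat.mul_lt_mul_of_lt_of_le (by omega) (le_refl _)
        positivity
      calc (w - 1) * (2 * h * h) < w * (2 * h * h) := this
        _ = 2 * w * h ^ 2 := by ring
    have : (suppEMD Γ : ℝ) < ((2 * w * h ^ 2 : ℕ) : ℝ) := by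
      exact_mod_cast lt_of_le_of_lt h1 h2
    simpa using this
  have hlamB : lam * suppEMD Γ < xmin := by
    calc lam * suppEMD Γ < lam * (2 * w * h ^ 2) :=
          mul_lt_mul_of_pos_left hΓbound hlampos
      _ = xmin := by rw [hlam]; field_simp
  -- SΩ < xmin
  have hSΩlt : SΩ < xmin := by
    have : SΩ ≤ lam * suppEMD Γ := by
      have h0 : (0:ℝ) ≤ lam * suppEMD Ω := by positivity
      linarith
    linarith
  -- X - X_Ω = 0
  have hXΩ : X - matRestrict X Ω = 0 := by
    by_contra hne0
    have : ∃ r c, (X - matRestrict X Ω) r c ≠ 0 := by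
      by_contra h'
      push_neg at h'
      exact hne0 (by ext r c; simpa using h' r c)
    obtain ⟨r, c, hrc⟩ := this
    have hnotin : (r, c) ∉ Ω := by
      intro hmem
      apply hrc
      simp [Matrix.sub_apply, matRestrict, hmem]
    have hXrc : X r c ≠ 0 := by
      intro h0
      apply hrc
      simp [Matrix.sub_apply, matRestrict, hnotin, h0]
    have hentry : (X - matRestrict X Ω) r c = X r c := by
      simp [Matrix.sub_apply, matRestrict, hnotin]
    have hge : xmin ≤ SΩ := by
      rw [hSΩval]
      calc xmin ≤ |X r c| ^ p := hxle r c hXrc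
        _ = |(X - matRestrict X Ω) r c| ^ p := by rw [hentry]
        _ ≤ ∑ c', |(X - matRestrict X Ω) r c'| ^ p := by
            exact Finset.single_le_sum
              (fun c' _ => Real.rpow_nonneg (abs_nonneg _) p) (Finset.mem_univ c)
        _ ≤ ∑ r', ∑ c', |(X - matRestrict X Ω) r' c'| ^ p := by
            exact Finset.single_le_sum
              (fun r' _ => Finset.sum_nonneg fun c' _ =>
                Real.rpow_nonneg (abs_nonneg _) p) (Finset.mem_univ r)
    linarith
  constructor
  · rw [hXΩ, matLpNorm]
    simp [Real.zero_rpow hp0, Real.zero_rpow (inv_ne_zero hp0)]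
  · -- EMD(Ω) ≤ B
    have hemd : lam * suppEMD Ω ≤ lam * suppEMD Γ := by linarith
    have : (suppEMD Ω : ℝ) ≤ suppEMD Γ := le_of_mul_le_mul_left hemd hlampos
    have h1 : suppEMD Ω ≤ suppEMD Γ := by exact_mod_cast this
    omega
end

section
/- Let X ∈ ℝ^{h×w}, p ≥ 1, let k be a multiple of w with s = k/w ≤ h, let B ∈ ℕ, and let λ ≥ 0. Suppose Ω is a support with exactly s entries in every column that minimizes ‖X − X_Γ‖_p^p + λ·EMD(Γ) over all supports Γ with exactly s entries in every column, and suppose EMD(Ω) ≥ B. Then ‖X − X_Ω‖_p^p ≤ min_{Γ ∈ 𝕄_{k,B}} ‖X − X_Γ‖_p^p. -/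
theorem stmt13 (h w s B k : ℕ) (p : ℝ) (hp : 1 ≤ p) (hk : k = s * w) (hs : s ≤ h)
    (X : Matrix (Fin h) (Fin w) ℝ) (lam : ℝ) (hlam : 0 ≤ lam)
    (Ω : Finset (Fin h × Fin w))
    (hcol : ∀ c < w, (colSupp Ω c).card = s)
    (hmin : ∀ Γ : Finset (Fin h × Fin w), (∀ c < w, (colSupp Γ c).card = s) →
      matLpNorm p (X - matRestrict X Ω) ^ p + lam * suppEMD Ω ≤
        matLpNorm p (X - matRestrict X Γ) ^ p + lam * suppEMD Γ)
    (hEMD : B ≤ suppEMD Ω) :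
    ∀ Γ ∈ cemdModel h w s B,
      matLpNorm p (X - matRestrict X Ω) ^ p ≤ matLpNorm p (X - matRestrict X Γ) ^ p := by
  intro Γ hΓ
  obtain ⟨hc, hB⟩ := hΓ
  have h1 := hmin Γ hc
  have h2 : (suppEMD Γ : ℝ) ≤ (suppEMD Ω : ℝ) := by exact_mod_cast hB.trans hEMD
  nlinarith [mul_le_mul_of_nonneg_left h2 hlam]
end

section
/- Let X ∈ ℝ^{h×w}, p ≥ 1, let k be a multiple of w with s = k/w ≤ h, let B ≥ 1 be a natural number, let d > 1 be real, and let λ ≥ 0. Suppose Ω is a support with exactly s entries in every column that minimizes ‖X − X_Γ‖_p^p + λ·EMD(Γ) over all supports Γ with exactly s entries in every column, and suppose EMD(Ω) ≥ dB. Then λ ≤ OPT/(B(d−1)), where OPT = min_{Γ ∈ 𝕄_{k,B}} ‖X − X_Γ‖_p^p. -/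
lemma natEMD_self (A : Finset ℕ) : natEMD A A = 0 := by
  apply Nat.sInf_eq_zero.mpr
  left
  exact ⟨id, Set.bijOn_id _, by simp⟩

lemma matLpNorm_pow_nonneg {h w : ℕ} (p : ℝ) (X : Matrix (Fin h) (Fin w) ℝ) :
    0 ≤ matLpNorm p X ^ p := by
  apply Real.rpow_nonneg
  apply Real.rpow_nonneg
  apply Finset.sum_nonneg
  intro r _
  apply Finset.sum_nonneg
  intro c _
  exact Real.rpow_nonneg (abs_nonneg _) p

theorem stmt14 (h w s B k : ℕ) (p : ℝ) (hp : 1 ≤ p) (hk : k = s * w) (hs : s ≤ h)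
    (hB : 1 ≤ B) (d : ℝ) (hd : 1 < d)
    (X : Matrix (Fin h) (Fin w) ℝ) (lam : ℝ) (hlam : 0 ≤ lam)
    (Ω : Finset (Fin h × Fin w))
    (hcol : ∀ c < w, (colSupp Ω c).card = s)
    (hmin : ∀ Γ : Finset (Fin h × Fin w), (∀ c < w, (colSupp Γ c).card = s) →
      matLpNorm p (X - matRestrict X Ω) ^ p + lam * suppEMD Ω ≤
        matLpNorm p (X - matRestrict X Γ) ^ p + lam * suppEMD Γ)
    (hEMD : d * B ≤ (suppEMD Ω : ℝ))
    (OPT : ℝ)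
    (hOPT : OPT = sInf ((fun Γ => matLpNorm p (X - matRestrict X Γ) ^ p) ''
      cemdModel h w s B)) :
    lam ≤ OPT / (B * (d - 1)) := by
  -- construct a canonical element of the model
  set Γ₀ : Finset (Fin h × Fin w) := Finset.univ.filter (fun q => (q.1 : ℕ) < s) with hΓ₀
  have hcolΓ₀ : ∀ c < w, colSupp Γ₀ c = Finset.range s := by
    intro c hc
    ext n
    simp only [colSupp, hΓ₀, Finset.mem_image, Finset.mem_filter, Finset.mem_univ,
      true_and, Finset.mem_range]
    constructor
    · rintro ⟨q, ⟨hq1, _⟩, rfl⟩; exact hq1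
    · intro hn
      exact ⟨(⟨n, lt_of_lt_of_le hn hs⟩, ⟨c, hc⟩), ⟨hn, rfl⟩, rfl⟩
  have hcards : ∀ c < w, (colSupp Γ₀ c).card = s := by
    intro c hc; rw [hcolΓ₀ c hc, Finset.card_range]
  have hEMD0 : suppEMD Γ₀ = 0 := by
    apply Finset.sum_eq_zero
    intro c hc
    rw [Finset.mem_range] at hc
    rw [hcolΓ₀ c (by omega), hcolΓ₀ (c+1) (by omega), natEMD_self]
  have hmem : Γ₀ ∈ cemdModel h w s B := ⟨hcards, by rw [hEMD0]; exact Nat.zero_le B⟩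
  have hBd : (0:ℝ) < (B:ℝ) * (d - 1) := by
    have : (1:ℝ) ≤ (B:ℝ) := by exact_mod_cast hB
    nlinarith
  -- key bound for every element of the model
  have key : ∀ y ∈ ((fun Γ => matLpNorm p (X - matRestrict X Γ) ^ p) ''
      cemdModel h w s B), lam * ((B:ℝ) * (d - 1)) ≤ y := by
    rintro y ⟨Γ, ⟨hΓcol, hΓEMD⟩, rfl⟩
    have h1 := hmin Γ hΓcol
    have h2 : lam * (suppEMD Γ : ℝ) ≤ lam * (B:ℝ) := by
      apply mul_le_mul_of_nonneg_left _ hlam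
      exact_mod_cast hΓEMD
    have h3 : lam * (d * B) ≤ lam * (suppEMD Ω : ℝ) :=
      mul_le_mul_of_nonneg_left hEMD hlam
    have h4 := matLpNorm_pow_nonneg p (X - matRestrict X Ω)
    nlinarith
  have hne : ((fun Γ => matLpNorm p (X - matRestrict X Γ) ^ p) ''
      cemdModel h w s B).Nonempty := ⟨_, Set.mem_image_of_mem _ hmem⟩
  have hOPTge : lam * ((B:ℝ) * (d - 1)) ≤ OPT := by
    rw [hOPT]; exact le_csInf hne key
  rw [le_div_iff₀ hBd]
  linarith
end

section
/- Let X ∈ ℝ^{h×w} with X ≠ 0, p ≥ 1, let k be a multiple of w with s = k/w ≤ h, let B be a natural number with 1 ≤ B ≤ w·h², let d > 1 and δ > 0 be reals, let x_min = min{|X_{ij}|^p : X_{ij} ≠ 0}, and let ε = x_min·δ/(w·h²). Let OPT = min_{Γ ∈ 𝕄_{k,B}} ‖X − X_Γ‖_p^p and assume OPT ≥ x_min. Suppose 0 ≤ λ_r, λ_l are reals with λ_l ≤ λ_r + ε; suppose Ω_r is a support with exactly s entries in every column minimizing ‖X − X_Γ‖_p^p + λ_r·EMD(Γ) over all such supports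 and EMD(Ω_r) ≥ dB; and suppose Ω_l is a support with exactly s entries in every column minimizing ‖X − X_Γ‖_p^p + λ_l·EMD(Γ) over all such supports and EMD(Ω_l) ≤ B. Then ‖X − X_{Ω_l}‖_p^p ≤ (1 + 1/(d−1) + δ)·OPT. -/
theorem stmt15 (h w s B k : ℕ) (p : ℝ) (hp : 1 ≤ p) (hk : k = s * w) (hs : s ≤ h)
    (hB1 : 1 ≤ B) (hB2 : B ≤ w * h ^ 2)
    (d δ : ℝ) (hd : 1 < d) (hδ : 0 < δ)
    (X : Matrix (Fin h) (Fin w) ℝ) (hX : X ≠ 0)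
    (xmin : ℝ) (hxmin : xmin = sInf {v : ℝ | ∃ r c, X r c ≠ 0 ∧ v = |X r c| ^ p})
    (ε : ℝ) (hε : ε = xmin * δ / (w * h ^ 2))
    (OPT : ℝ)
    (hOPT : OPT = sInf ((fun Γ => matLpNorm p (X - matRestrict X Γ) ^ p) ''
      cemdModel h w s B))
    (hOPTmin : xmin ≤ OPT)
    (lamr laml : ℝ) (hlamr : 0 ≤ lamr) (hlaml : 0 ≤ laml)
    (hlam : laml ≤ lamr + ε)
    (Ωr : Finset (Fin h × Fin w))
    (hcolr : ∀ c < w, (colSupp Ωr c).card = s)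
    (hminr : ∀ Γ : Finset (Fin h × Fin w), (∀ c < w, (colSupp Γ c).card = s) →
      matLpNorm p (X - matRestrict X Ωr) ^ p + lamr * suppEMD Ωr ≤
        matLpNorm p (X - matRestrict X Γ) ^ p + lamr * suppEMD Γ)
    (hEMDr : d * B ≤ (suppEMD Ωr : ℝ))
    (Ωl : Finset (Fin h × Fin w))
    (hcoll : ∀ c < w, (colSupp Ωl c).card = s)
    (hminl : ∀ Γ : Finset (Fin h × Fin w), (∀ c < w, (colSupp Γ c).card = s) →
      matLpNorm p (X - matRestrict X Ωl) ^ p + laml * suppEMD Ωl ≤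
        matLpNorm p (X - matRestrict X Γ) ^ p + laml * suppEMD Γ)
    (hEMDl : suppEMD Ωl ≤ B) :
    matLpNorm p (X - matRestrict X Ωl) ^ p ≤ (1 + 1 / (d - 1) + δ) * OPT := by
  classical
  set f : Finset (Fin h × Fin w) → ℝ :=
    fun Γ => matLpNorm p (X - matRestrict X Γ) ^ p with hf
  have hfnn : ∀ Γ, 0 ≤ f Γ := by
    intro Γ
    apply Real.rpow_nonneg
    apply Real.rpow_nonneg
    apply Finset.sum_nonneg; intro r _
    apply Finset.sum_nonneg; intro c _
    exact Real.rpow_nonneg (abs_nonneg _) _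
  -- the model is nonempty
  set Γ0 : Finset (Fin h × Fin w) :=
    Finset.univ.filter (fun q : Fin h × Fin w => (q.1 : ℕ) < s) with hΓ0def
  have hcol0 : ∀ c < w, colSupp Γ0 c = Finset.range s := by
    intro c hc
    ext x
    simp only [colSupp, hΓ0def, Finset.mem_image, Finset.mem_filter, Finset.mem_univ,
      true_and, Finset.mem_range]
    constructor
    · rintro ⟨q, ⟨hq, _⟩, rfl⟩; exact hq
    · intro hx
      exact ⟨(⟨x, lt_of_lt_of_le hx hs⟩, ⟨c, hc⟩), ⟨hx, rfl⟩, rfl⟩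
  have hEMD0 : ∀ A : Finset ℕ, natEMD A A = 0 := by
    intro A
    apply Nat.sInf_eq_zero.mpr
    left
    exact ⟨id, Set.bijOn_id _, by simp⟩
  have hΓ0mem : Γ0 ∈ cemdModel h w s B := by
    constructor
    · intro c hc
      rw [hcol0 c hc, Finset.card_range]
    · have : suppEMD Γ0 = 0 := by
        unfold suppEMD
        apply Finset.sum_eq_zero
        intro c hc
        have hc' := Finset.mem_range.mp hc
        have h1 : c < w := lt_of_lt_of_le hc' (Nat.sub_le _ _)
        have h2 : c + 1 < w := by omega
        rw [hcol0 c h1, hcol0 (c + 1) h2, hEMD0]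
      omega
  -- OPT is achieved
  have himg : (f '' cemdModel h w s B).Nonempty := ⟨f Γ0, Γ0, hΓ0mem, rfl⟩
  have hfin : (f '' cemdModel h w s B).Finite := (Set.toFinite _).image f
  have hmem : OPT ∈ f '' cemdModel h w s B := hOPT ▸ himg.csInf_mem hfin
  obtain ⟨Γs, ⟨hcols, hEMDs⟩, hfΓ⟩ := hmem
  have h1 := hminr Γs hcols
  have h2 := hminl Γs hcols
  rw [show matLpNorm p (X - matRestrict X Γs) ^ p = OPT from hfΓ] at h1 h2
  have hEMDsR : (suppEMD Γs : ℝ) ≤ (B : ℝ) := Nat.cast_le.mpr hEMDs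
  have hEMDlR : (suppEMD Ωl : ℝ) ≤ (B : ℝ) := Nat.cast_le.mpr hEMDl
  have hBpos : (0:ℝ) < (B : ℝ) := by exact_mod_cast hB1
  have hd1 : (0:ℝ) < d - 1 := by linarith
  have hOPTnn : 0 ≤ OPT := by rw [← hfΓ]; exact hfnn Γs
  -- bound lamr * B
  have hkey : lamr * B * (d - 1) ≤ OPT := by
    have hr1 : lamr * (d * B) ≤ lamr * (suppEMD Ωr : ℝ) :=
      mul_le_mul_of_nonneg_left hEMDr hlamr
    have hr2 : lamr * (suppEMD Γs : ℝ) ≤ lamr * B :=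
      mul_le_mul_of_nonneg_left hEMDsR hlamr
    have hfr := hfnn Ωr
    nlinarith [h1]
  -- bound ε * B
  have hxminnn : 0 ≤ xmin := by
    rw [hxmin]
    apply Real.sInf_nonneg
    rintro v ⟨r, c, _, rfl⟩
    exact Real.rpow_nonneg (abs_nonneg _) _
  have hWpos : (0:ℝ) < (w : ℝ) * (h : ℝ) ^ 2 := by
    have : 1 ≤ w * h ^ 2 := le_trans hB1 hB2
    have : (1:ℝ) ≤ (w : ℝ) * (h : ℝ) ^ 2 := by exact_mod_cast this
    linarith
  have hBW : (B : ℝ) ≤ (w : ℝ) * (h : ℝ) ^ 2 := by exact_mod_cast hB2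
  have hεB : ε * B ≤ δ * OPT := by
    rw [hε]
    rw [div_mul_eq_mul_div, div_le_iff₀ hWpos]
    have e1 : xmin * δ * (B : ℝ) ≤ xmin * δ * ((w : ℝ) * (h : ℝ) ^ 2) :=
      mul_le_mul_of_nonneg_left hBW (mul_nonneg hxminnn hδ.le)
    have e2 : xmin * δ * ((w : ℝ) * (h : ℝ) ^ 2) ≤ OPT * δ * ((w : ℝ) * (h : ℝ) ^ 2) :=
      mul_le_mul_of_nonneg_right (mul_le_mul_of_nonneg_right hOPTmin hδ.le) hWpos.le
    have e3 : OPT * δ * ((w : ℝ) * (h : ℝ) ^ 2) = δ * OPT * ((w : ℝ) * (h : ℝ) ^ 2) := by ring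
    linarith
  -- conclude
  have hl1 : laml * (suppEMD Γs : ℝ) ≤ laml * B :=
    mul_le_mul_of_nonneg_left hEMDsR hlaml
  have hl2 : 0 ≤ laml * (suppEMD Ωl : ℝ) :=
    mul_nonneg hlaml (Nat.cast_nonneg _)
  have hl3 : laml * B ≤ lamr * B + ε * B := by
    have h := mul_le_mul_of_nonneg_right hlam hBpos.le
    have he : (lamr + ε) * (B : ℝ) = lamr * B + ε * B := by ring
    linarith
  have hl4 : lamr * B ≤ 1 / (d - 1) * OPT := by
    rw [div_mul_eq_mul_div, le_div_iff₀ hd1]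
    linarith
  have hfinal : matLpNorm p (X - matRestrict X Ωl) ^ p ≤ OPT + 1 / (d - 1) * OPT + δ * OPT := by
    linarith [h2]
  calc matLpNorm p (X - matRestrict X Ωl) ^ p
      ≤ OPT + 1 / (d - 1) * OPT + δ * OPT := hfinal
    _ = (1 + 1 / (d - 1) + δ) * OPT := by ring
end

section
/- Let m ≥ 1 and n ≥ 2 be natural numbers and let A be a random m×n matrix whose entries are independent and identically distributed, each equal to +1/√m or −1/√m with probability 1/2. Let e₁ ∈ ℝⁿ be the first standard basis vector and a = AᵀA e₁. Then: (i) a₁ = 1 almost surely; (ii) E[a_i²] = 1/m for every i ≥ 2; and (iii) for every t > 0, the probability that Σ_{i=2}^n a_i² ≤ (n−1)(1/m − t) is at most exp(−2(n−1)t²). In particular, for any real c > 1, if (n−1)(1/m − t) ≥ 1/(c²−1), then ‖a‖₂² ≥ c²/(c²−1) with probability at least 1 − exp(−2(n−1)t²). -/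
open MeasureTheory ProbabilityTheory
open scoped ENNReal NNReal

namespace Stmt18Aux

noncomputable def sg (b : Bool) : ℝ := if b then -1 else 1

lemma sg_sq (b : Bool) : sg b ^ 2 = 1 := by cases b <;> simp [sg]

lemma sg_not (b : Bool) : sg (!b) = - sg b := by cases b <;> simp [sg]

lemma sg_xor (a b : Bool) : sg (xor a b) = sg a * sg b := by
  cases a <;> cases b <;> norm_num [sg]

lemma sg_abs (b : Bool) : |sg b| = 1 := by cases b <;> simp [sg]

lemma flip_sum {γ : Type*} [Fintype γ] [DecidableEq γ] (p : γ) (f : (γ → Bool) → ℝ)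
    (hf : ∀ σ, f (Function.update σ p (!σ p)) = - f σ) :
    ∑ σ : γ → Bool, f σ = 0 := by
  have hT : Function.Involutive (fun σ : γ → Bool => Function.update σ p (!σ p)) := by
    intro σ
    funext q
    by_cases h : q = p
    · subst h; simp
    · simp [Function.update_of_ne h]
  have hb := hT.bijective
  have h1 : ∑ σ : γ → Bool, f (Function.update σ p (!σ p)) = ∑ σ : γ → Bool, f σ :=
    hb.sum_comp f
  have h2 : ∑ σ : γ → Bool, f (Function.update σ p (!σ p)) = - ∑ σ : γ → Bool, f σ := by
    rw [← Finset.sum_neg_distrib]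
    exact Finset.sum_congr rfl fun σ _ => hf σ
  linarith [h1.symm.trans h2]

lemma sum_sq {γ : Type*} [Fintype γ] [DecidableEq γ] {M : ℕ} (w : Fin M → (γ → Bool) → ℝ)
    (hsq : ∀ k σ, w k σ ^ 2 = 1)
    (horth : ∀ k l, k ≠ l → ∑ σ : γ → Bool, w k σ * w l σ = 0) :
    ∑ σ : γ → Bool, (∑ k, w k σ) ^ 2 = 2 ^ Fintype.card γ * M := by
  have expand : ∀ σ, (∑ k, w k σ) ^ 2 = ∑ k, ∑ l, w k σ * w l σ := by
    intro σ; rw [sq, Finset.sum_mul_sum]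
  calc ∑ σ : γ → Bool, (∑ k, w k σ) ^ 2
      = ∑ σ : γ → Bool, ∑ k, ∑ l, w k σ * w l σ := Finset.sum_congr rfl fun σ _ => expand σ
    _ = ∑ k, ∑ l, ∑ σ : γ → Bool, w k σ * w l σ := by
        rw [Finset.sum_comm]
        exact Finset.sum_congr rfl fun k _ => Finset.sum_comm
    _ = ∑ k : Fin M, (2 : ℝ) ^ Fintype.card γ := by
        refine Finset.sum_congr rfl fun k _ => ?_
        rw [Finset.sum_eq_single k]
        · have : ∀ σ : γ → Bool, w k σ * w k σ = 1 := fun σ => by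
            have := hsq k σ; nlinarith [hsq k σ]
          simp only [this, Finset.sum_const, Finset.card_univ, nsmul_eq_mul, mul_one]
          rw [Fintype.card_fun]
          simp
        · intro l _ hl; exact horth k l (Ne.symm hl)
        · simp
    _ = 2 ^ Fintype.card γ * M := by simp [mul_comm]


lemma hoeff_log {p : ℝ} (hp0 : 0 < p) (hp1 : p ≤ 1) {x : ℝ} (hx : 0 ≤ x) :
    Real.log (1 - p + p * Real.exp (-x)) ≤ -x * p + x ^ 2 / 8 := by
  set φ : ℝ → ℝ := fun y => 1 - p + p * Real.exp (-y) with hφdef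
  have hφpos : ∀ y, 0 < φ y := by
    intro y
    have := Real.exp_pos (-y)
    simp only [hφdef]
    nlinarith
  have hφd : ∀ y, HasDerivAt φ (-(p * Real.exp (-y))) y := by
    intro y
    have h1 : HasDerivAt (fun y : ℝ => -y) (-1) y := (hasDerivAt_id y).neg
    have h2 : HasDerivAt (fun y : ℝ => Real.exp (-y)) (Real.exp (-y) * -1) y :=
      (Real.hasDerivAt_exp (-y)).comp y h1
    have h3 := (h2.const_mul p).const_add (1 - p)
    refine h3.congr_deriv ?_
    ring
  set g : ℝ → ℝ := fun y => p - y / 4 - p * (Real.exp (-y) / φ y) with hgdef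
  set f : ℝ → ℝ := fun y => Real.log (φ y) + y * p - y ^ 2 / 8 with hfdef
  have hfd : ∀ y, HasDerivAt f (g y) y := by
    intro y
    have hlog : HasDerivAt (fun y => Real.log (φ y)) (-(p * Real.exp (-y)) / φ y) y :=
      (hφd y).log (hφpos y).ne'
    have hyp : HasDerivAt (fun y : ℝ => y * p) p y := hasDerivAt_mul_const p
    have hsq : HasDerivAt (fun y : ℝ => y ^ 2 / 8) (2 * y ^ 1 / 8) y :=
      (hasDerivAt_pow 2 y).div_const 8
    have := (hlog.add hyp).sub hsq
    refine this.congr_deriv ?_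
    simp only [hgdef]
    field_simp
    ring
  have hgd : ∀ y, HasDerivAt g (-(1/4) + p * (Real.exp (-y) * (1 - p) / (φ y) ^ 2)) y := by
    intro y
    have h1 : HasDerivAt (fun y : ℝ => -y) (-1) y := (hasDerivAt_id y).neg
    have h2 : HasDerivAt (fun y : ℝ => Real.exp (-y)) (Real.exp (-y) * -1) y :=
      (Real.hasDerivAt_exp (-y)).comp y h1
    have hdiv : HasDerivAt (fun y : ℝ => Real.exp (-y) / φ y)
        ((Real.exp (-y) * -1 * φ y - Real.exp (-y) * (-(p * Real.exp (-y)))) / (φ y) ^ 2) y :=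
      h2.div (hφd y) (hφpos y).ne'
    have hc : HasDerivAt (fun y : ℝ => p - y / 4) (-(1/4)) y := by
      have := ((hasDerivAt_id y).div_const 4).const_sub p
      exact this
    have := hc.sub ((hdiv.const_mul p))
    refine this.congr_deriv ?_
    simp only [hφdef]
    field_simp
    ring
  have hganti : Antitone g := by
    refine antitone_of_deriv_nonpos (fun y => (hgd y).differentiableAt) ?_
    intro y
    rw [(hgd y).deriv]
    have main : ∀ E : ℝ, 0 < E → -(1/4) + p * (E * (1 - p) / (1 - p + p * E) ^ 2) ≤ 0 := by
      intro E hE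
      have h0 : 0 < 1 - p + p * E := by nlinarith [mul_pos hp0 hE]
      have hb : 0 < (1 - p + p * E) ^ 2 := pow_pos h0 2
      have h2 : p * (E * (1 - p)) / (1 - p + p * E) ^ 2 ≤ 1 / 4 := by
        rw [div_le_iff₀ hb]
        nlinarith [sq_nonneg ((1 - p) - p * E)]
      rw [mul_div_assoc] at h2
      linarith
    simp only [hφdef]
    exact main (Real.exp (-y)) (Real.exp_pos _)
  have hg0 : g 0 = 0 := by
    simp only [hgdef, hφdef]
    norm_num
  have hfanti : AntitoneOn f (Set.Ici 0) := by
    refine antitoneOn_of_deriv_nonpos (convex_Ici 0) ?_ ?_ ?_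
    · exact fun y _ => ((hfd y).differentiableAt).continuousAt.continuousWithinAt
    · intro y hy
      exact ((hfd y).differentiableAt).differentiableWithinAt
    · intro y hy
      rw [(hfd y).deriv]
      rw [interior_Ici] at hy
      calc g y ≤ g 0 := hganti (le_of_lt hy)
        _ = 0 := hg0
  have hf0 : f 0 = 0 := by
    simp only [hfdef, hφdef]
    norm_num
  have := hfanti (Set.self_mem_Ici) (Set.mem_Ici.2 hx) hx
  rw [hf0] at this
  simp only [hfdef, hφdef] at this
  linarith

lemma mgf_bound {p : ℝ} (hp0 : 0 < p) (hp1 : p ≤ 1) {t : ℝ} (ht : 0 < t) :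
    Real.exp ((4 * t) * (p - t)) * (1 - p + p * Real.exp (-(4 * t))) ≤ Real.exp (-2 * t ^ 2) := by
  have hφpos : 0 < 1 - p + p * Real.exp (-(4 * t)) := by
    have := Real.exp_pos (-(4 * t)); nlinarith
  have hlog := hoeff_log hp0 hp1 (x := 4 * t) (by linarith)
  rw [← Real.exp_log hφpos, ← Real.exp_add]
  apply Real.exp_le_exp.2
  nlinarith [hlog]


-- the two-point measure (1/2)δ_q + (1/2)δ_{-q}
noncomputable def tp (q : ℝ) : Measure ℝ :=
  (2⁻¹ : ℝ≥0∞) • Measure.dirac q + (2⁻¹ : ℝ≥0∞) • Measure.dirac (-q)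

instance tp_prob (q : ℝ) : IsProbabilityMeasure (tp q) := by
  constructor
  simp [tp, ENNReal.inv_two_add_inv_two]

lemma tp_apply (q : ℝ) {B : Set ℝ} (hB : MeasurableSet B) :
    tp q B = 2⁻¹ * B.indicator 1 q + 2⁻¹ * B.indicator 1 (-q) := by
  simp [tp, Measure.dirac_apply' _ hB]

-- the product of two-point measures is the uniform mixture of Dirac measures on sign patterns
lemma pi_two_point {γ : Type*} [Fintype γ] [DecidableEq γ] (q : ℝ) :
    (Measure.pi fun _ : γ => tp q)
      = ∑ σ : γ → Bool, ((2 : ℝ≥0∞) ^ Fintype.card γ)⁻¹ •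
          Measure.dirac (fun p => sg (σ p) * q) := by
  classical
  refine Measure.pi_eq fun B hB => ?_
  have hBpi : MeasurableSet (Set.pi Set.univ B) := MeasurableSet.univ_pi hB
  rw [Measure.finset_sum_apply]
  have hterm : ∀ σ : γ → Bool,
      (((2 : ℝ≥0∞) ^ Fintype.card γ)⁻¹ • Measure.dirac (fun p => sg (σ p) * q))
        (Set.pi Set.univ B)
      = ∏ p : γ, (2⁻¹ * (B p).indicator (1 : ℝ → ℝ≥0∞) (sg (σ p) * q)) := by
    intro σ
    rw [Measure.smul_apply, Measure.dirac_apply' _ hBpi, smul_eq_mul]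
    simp only [Set.indicator_apply, Pi.one_apply, Set.mem_univ_pi]
    rw [← Fintype.prod_boole]
    rw [Finset.prod_mul_distrib, Finset.prod_const, ← ENNReal.inv_pow, Finset.card_univ]
  simp only [hterm]
  have hrhs : ∀ p : γ, tp q (B p)
      = ∑ b : Bool, 2⁻¹ * (B p).indicator (1 : ℝ → ℝ≥0∞) (sg b * q) := by
    intro p
    rw [tp_apply q (hB p), Fintype.sum_bool]
    simp [sg]
    ring
  simp only [hrhs]
  rw [Finset.prod_univ_sum]
  rw [Fintype.piFinset_univ]

end Stmt18Aux

namespace Stmt18Aux2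

lemma marginal {Ω : Type*} [MeasurableSpace Ω] (μ : Measure Ω) [IsProbabilityMeasure μ]
    (Y : Ω → ℝ) (hYm : Measurable Y) {q : ℝ} (hq : q ≠ 0)
    (hp : μ {ω | Y ω = q} = 2⁻¹) (hm : μ {ω | Y ω = -q} = 2⁻¹)
    {B : Set ℝ} (hB : MeasurableSet B) :
    μ (Y ⁻¹' B) = 2⁻¹ * B.indicator 1 q + 2⁻¹ * B.indicator 1 (-q) := by
  classical
  set Sa := Y ⁻¹' {q} with hSadef
  set Sb := Y ⁻¹' {-q} with hSbdef
  have hma : MeasurableSet Sa := hYm (measurableSet_singleton q)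
  have hmb : MeasurableSet Sb := hYm (measurableSet_singleton (-q))
  have hd : Disjoint Sa Sb := by
    refine Set.disjoint_left.2 fun ω ha hb => ?_
    have h1 : Y ω = q := ha
    have h2 : Y ω = -q := hb
    have : q = -q := h1 ▸ h2
    have : q = 0 := by linarith [this]
    exact hq this
  have hSa : μ Sa = 2⁻¹ := hp
  have hSb : μ Sb = 2⁻¹ := hm
  have hU : μ (Sa ∪ Sb) = 1 := by
    rw [measure_union hd hmb, hSa, hSb, ENNReal.inv_two_add_inv_two]
  have hcompl : μ ((Sa ∪ Sb)ᶜ) = 0 := by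
    rw [measure_compl (hma.union hmb) (measure_ne_top μ _), hU, measure_univ, tsub_self]
  have hsplit : μ (Y ⁻¹' B) = μ ((Y ⁻¹' B) ∩ (Sa ∪ Sb)) := by
    have h1 := measure_inter_add_diff (μ := μ) (Y ⁻¹' B) (hma.union hmb)
    have h2 : μ ((Y ⁻¹' B) \ (Sa ∪ Sb)) = 0 :=
      measure_mono_null (Set.diff_subset_compl _ _) hcompl
    rw [h2, add_zero] at h1
    exact h1.symm
  have hIa : (Y ⁻¹' B) ∩ Sa = if q ∈ B then Sa else ∅ := by
    by_cases hqB : q ∈ B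
    · rw [if_pos hqB]
      ext ω
      exact ⟨fun h => h.2, fun h => ⟨by rw [Set.mem_preimage]; rw [show Y ω = q from h]; exact hqB, h⟩⟩
    · rw [if_neg hqB]
      ext ω
      refine ⟨fun h => hqB ?_, fun h => absurd h (Set.notMem_empty ω)⟩
      have := h.1
      rw [Set.mem_preimage] at this
      rwa [show Y ω = q from h.2] at this
  have hIb : (Y ⁻¹' B) ∩ Sb = if -q ∈ B then Sb else ∅ := by
    by_cases hqB : -q ∈ B
    · rw [if_pos hqB]
      ext ω
      exact ⟨fun h => h.2, fun h => ⟨by rw [Set.mem_preimage]; rw [show Y ω = -q from h]; exact hqB, h⟩⟩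
    · rw [if_neg hqB]
      ext ω
      refine ⟨fun h => hqB ?_, fun h => absurd h (Set.notMem_empty ω)⟩
      have := h.1
      rw [Set.mem_preimage] at this
      rwa [show Y ω = -q from h.2] at this
  rw [hsplit, Set.inter_union_distrib_left,
    measure_union (hd.mono Set.inter_subset_right Set.inter_subset_right) ((hYm hB).inter hmb),
    hIa, hIb]
  by_cases h1 : q ∈ B <;> by_cases h2 : -q ∈ B <;>
    simp [h1, h2, hSa, hSb, Set.indicator_apply]

lemma map_eq_pi {Ω : Type*} [MeasurableSpace Ω] (μ : Measure Ω) [IsProbabilityMeasure μ]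
    {γ : Type*} [Fintype γ] (Y : γ → Ω → ℝ) (hYm : ∀ p, Measurable (Y p))
    {q : ℝ} (hq : q ≠ 0)
    (hp : ∀ p, μ {ω | Y p ω = q} = 2⁻¹) (hm : ∀ p, μ {ω | Y p ω = -q} = 2⁻¹)
    (hindep : iIndepFun Y μ) :
    μ.map (fun ω p => Y p ω) = Measure.pi (fun _ : γ =>
      (2⁻¹ : ℝ≥0∞) • Measure.dirac q + (2⁻¹ : ℝ≥0∞) • Measure.dirac (-q)) := by
  have htp : ∀ (i : γ) (B : Set ℝ), MeasurableSet B →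
      ((2⁻¹ : ℝ≥0∞) • Measure.dirac q + (2⁻¹ : ℝ≥0∞) • Measure.dirac (-q)) B
        = 2⁻¹ * B.indicator 1 q + 2⁻¹ * B.indicator 1 (-q) := by
    intro i B hB
    simp [Measure.dirac_apply' _ hB]
  have : IsProbabilityMeasure ((2⁻¹ : ℝ≥0∞) • Measure.dirac q + (2⁻¹ : ℝ≥0∞) • Measure.dirac (-q)) := by
    constructor
    simp [ENNReal.inv_two_add_inv_two]
  refine (Measure.pi_eq fun B hB => ?_).symm
  have hX : Measurable (fun ω (p : γ) => Y p ω) := measurable_pi_lambda _ hYm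
  rw [Measure.map_apply hX (MeasurableSet.univ_pi hB)]
  have hpre : (fun ω (p : γ) => Y p ω) ⁻¹' Set.pi Set.univ B
      = ⋂ p ∈ (Finset.univ : Finset γ), Y p ⁻¹' B p := by
    ext ω
    simp [Set.mem_univ_pi]
  rw [hpre, hindep.measure_inter_preimage_eq_mul Finset.univ (fun p _ => hB p)]
  refine Finset.prod_congr rfl fun p _ => ?_
  rw [marginal μ (Y p) (hYm p) hq (hp p) (hm p) (hB p), htp p (B p) (hB p)]

lemma sum_dirac_apply {W ι : Type*} [MeasurableSpace W] [Fintype ι] (c : ℝ≥0∞) (x : ι → W)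
    {S : Set W} (hS : MeasurableSet S) :
    (∑ i : ι, c • Measure.dirac (x i)) S = ∑ i : ι, c * S.indicator 1 (x i) := by
  rw [Measure.finset_sum_apply]
  refine Finset.sum_congr rfl fun i _ => ?_
  rw [Measure.smul_apply, Measure.dirac_apply' _ hS, smul_eq_mul]

lemma sum_dirac_integral {W ι : Type*} [MeasurableSpace W] [Fintype ι] (c : ℝ≥0∞) (hc : c ≠ ⊤)
    (x : ι → W) (g : W → ℝ) (hg : Measurable g) :
    ∫ y, g y ∂(∑ i : ι, c • Measure.dirac (x i)) = ∑ i : ι, c.toReal * g (x i) := by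
  have hint : ∀ i : ι, Integrable g (c • Measure.dirac (x i)) := by
    intro i
    have hae : g =ᵐ[Measure.dirac (x i)] fun _ => g (x i) := ae_eq_dirac' hg
    exact ((integrable_const (g (x i))).congr hae.symm).smul_measure hc
  rw [integral_finset_sum_measure fun i _ => hint i]
  refine Finset.sum_congr rfl fun i _ => ?_
  rw [integral_smul_measure, integral_dirac' g (x i) hg.stronglyMeasurable, smul_eq_mul]

end Stmt18Aux2


open Stmt18Aux Stmt18Aux2 in
set_option maxHeartbeats 4000000 in
theorem stmt18 {m n : ℕ} (hm : 1 ≤ m) (hn : 2 ≤ n)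
    {Ω : Type*} [MeasurableSpace Ω] (μ : Measure Ω) [IsProbabilityMeasure μ]
    (A : Ω → Matrix (Fin m) (Fin n) ℝ)
    (hmeas : ∀ i j, Measurable fun ω => A ω i j)
    -- each entry equals `+1/√m` or `−1/√m`, each with probability `1/2`
    (hplus : ∀ i j, μ {ω | A ω i j = 1 / Real.sqrt m} = 1 / 2)
    (hminus : ∀ i j, μ {ω | A ω i j = -(1 / Real.sqrt m)} = 1 / 2)
    -- the entries are mutually independent
    (hindep : iIndepFun
      (fun (ij : Fin m × Fin n) (ω : Ω) => A ω ij.1 ij.2) μ)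
    (e₁ : Fin n → ℝ) (he₁ : e₁ = fun j => if j = (⟨0, by omega⟩ : Fin n) then 1 else 0)
    (a : Ω → Fin n → ℝ) (ha : a = fun ω => (Matrix.transpose (A ω)).mulVec ((A ω).mulVec e₁)) :
    -- (i) the first coordinate of `a` equals 1 almost surely
    (∀ᵐ ω ∂μ, a ω ⟨0, by omega⟩ = 1) ∧
    -- (ii) `E[aᵢ²] = 1/m` for every coordinate other than the first
    (∀ i : Fin n, i ≠ ⟨0, by omega⟩ → ∫ ω, (a ω i) ^ 2 ∂μ = 1 / m) ∧
    -- (iii) the Hoeffding-type lower-tail bound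
    (∀ t : ℝ, 0 < t →
      μ {ω | ∑ i ∈ Finset.univ.filter (fun i : Fin n => i ≠ (⟨0, by omega⟩ : Fin n)),
          (a ω i) ^ 2 ≤ ((n : ℝ) - 1) * (1 / m - t)} ≤
        ENNReal.ofReal (Real.exp (-2 * ((n : ℝ) - 1) * t ^ 2))) ∧
    -- in particular: `‖a‖₂² ≥ c²/(c²−1)` with high probability
    (∀ c t : ℝ, 1 < c → 0 < t → 1 / (c ^ 2 - 1) ≤ ((n : ℝ) - 1) * (1 / m - t) →
      1 - ENNReal.ofReal (Real.exp (-2 * ((n : ℝ) - 1) * t ^ 2)) ≤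
        μ {ω | c ^ 2 / (c ^ 2 - 1) ≤ ∑ i, (a ω i) ^ 2}) := by
  classical
  have hm0 : (0:ℝ) < m := by exact_mod_cast hm
  have hn1 : 1 ≤ n := by omega
  set z : Fin n := ⟨0, by omega⟩ with hzdef
  set q : ℝ := 1 / Real.sqrt m with hqdef
  have hsqrt : 0 < Real.sqrt m := Real.sqrt_pos.2 hm0
  have hq0 : 0 < q := by rw [hqdef]; positivity
  have hq2 : q ^ 2 = ((m:ℝ))⁻¹ := by
    rw [hqdef, div_pow, one_pow, Real.sq_sqrt (le_of_lt hm0), one_div]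
  set X : Ω → ((Fin m × Fin n) → ℝ) := fun ω p => A ω p.1 p.2 with hXdef
  have hXmeas : Measurable X := measurable_pi_lambda _ (fun p => hmeas p.1 p.2)
  set ι : ((Fin m × Fin n) → Bool) → ((Fin m × Fin n) → ℝ) := fun σ p => sg (σ p) * q with hιdef
  set c : ℝ≥0∞ := ((2:ℝ≥0∞) ^ Fintype.card (Fin m × Fin n))⁻¹ with hcdef
  -- the law of the matrix entries
  have hlaw : μ.map X = ∑ σ : (Fin m × Fin n) → Bool, c • Measure.dirac (ι σ) := by
    have h1 := map_eq_pi μ (fun (p : Fin m × Fin n) ω => A ω p.1 p.2) (fun p => hmeas p.1 p.2) (ne_of_gt hq0)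
      (fun p => by rw [← one_div 2]; exact hplus p.1 p.2)
      (fun p => by rw [← one_div 2]; exact hminus p.1 p.2)
      hindep
    rw [hXdef]
    rw [h1]
    exact pi_two_point q
  -- the coordinates of `a` as functions of the matrix entries
  set F : ((Fin m × Fin n) → ℝ) → Fin n → ℝ := fun x i => ∑ k : Fin m, x (k, i) * x (k, z)
    with hFdef
  have hFmeas : ∀ i, Measurable fun x => F x i := by
    intro i
    rw [hFdef]
    exact Finset.measurable_sum _ fun k _ =>
      (measurable_pi_apply (k, i)).mul (measurable_pi_apply (k, z))
  have hFa : ∀ ω i, a ω i = F (X ω) i := by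
    intro ω i
    rw [ha, hFdef, hXdef]
    simp only [Matrix.mulVec, dotProduct, Matrix.transpose_apply, he₁]
    refine Finset.sum_congr rfl fun k _ => ?_
    congr 1
    simp [Finset.sum_ite_eq', hzdef]
  have hgb : ∀ b : Bool, sg b * sg b = 1 := by
    intro b
    have := sg_sq b
    nlinarith
  have hFι : ∀ σ i, F (ι σ) i = q ^ 2 * ∑ k : Fin m, sg (σ (k, i)) * sg (σ (k, z)) := by
    intro σ i
    rw [hFdef, hιdef, Finset.mul_sum]
    refine Finset.sum_congr rfl fun k _ => ?_
    ring
  have hFz : ∀ σ, F (ι σ) z = 1 := by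
    intro σ
    rw [hFι]
    have : ∀ k : Fin m, sg (σ (k, z)) * sg (σ (k, z)) = 1 := fun k => hgb _
    rw [Finset.sum_congr rfl fun k _ => this k]
    rw [Finset.sum_const, Finset.card_univ, Fintype.card_fin, hq2, nsmul_eq_mul, mul_one]
    field_simp
  -- part (i)
  have part1 : ∀ᵐ ω ∂μ, a ω z = 1 := by
    rw [ae_iff]
    have hset : {ω | ¬ a ω z = 1} = X ⁻¹' {x | F x z = 1}ᶜ := by
      ext ω
      simp [hFa ω z]
    have hSm : MeasurableSet ({x : (Fin m × Fin n) → ℝ | F x z = 1}ᶜ) :=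
      ((hFmeas z) (measurableSet_singleton 1)).compl
    rw [hset, ← Measure.map_apply hXmeas hSm, hlaw, sum_dirac_apply c ι hSm]
    refine Finset.sum_eq_zero fun σ _ => ?_
    rw [Set.indicator_of_notMem, mul_zero]
    simp [hFz σ]
  -- constants
  have hcard : Fintype.card (Fin m × Fin n) = m * n := by simp
  have hctop : c ≠ ⊤ := by
    rw [hcdef]
    simp
  have hctoReal : c.toReal = ((2:ℝ) ^ (m * n))⁻¹ := by
    rw [hcdef, hcard]
    simp [ENNReal.toReal_inv, ENNReal.toReal_pow]
  -- orthogonality of the summands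
  have horth : ∀ i : Fin n, i ≠ z → ∀ k l : Fin m, k ≠ l →
      ∑ σ : (Fin m × Fin n) → Bool,
        (sg (σ (k, i)) * sg (σ (k, z))) * (sg (σ (l, i)) * sg (σ (l, z))) = 0 := by
    intro i hi k l hkl
    refine flip_sum (k, i) _ fun σ => ?_
    have h1 : ((k, z) : Fin m × Fin n) ≠ (k, i) := by
      simp only [ne_eq, Prod.mk.injEq, not_and]
      intro _
      exact fun h => hi h.symm
    have h2 : ((l, i) : Fin m × Fin n) ≠ (k, i) := by
      simp only [ne_eq, Prod.mk.injEq, not_and]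
      intro h
      exact absurd h hkl.symm
    have h3 : ((l, z) : Fin m × Fin n) ≠ (k, i) := by
      simp only [ne_eq, Prod.mk.injEq, not_and]
      intro h
      exact absurd h hkl.symm
    rw [Function.update_self, Function.update_of_ne h1, Function.update_of_ne h2,
      Function.update_of_ne h3, sg_not]
    ring
  -- part (ii)
  have part2 : ∀ i : Fin n, i ≠ z → ∫ ω, (a ω i) ^ 2 ∂μ = 1 / m := by
    intro i hi
    have hgmeas : Measurable fun x : (Fin m × Fin n) → ℝ => (F x i) ^ 2 := (hFmeas i).pow_const 2
    have h1 : ∫ ω, (a ω i) ^ 2 ∂μ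
        = ∑ σ : (Fin m × Fin n) → Bool, c.toReal * (F (ι σ) i) ^ 2 := by
      rw [← sum_dirac_integral c hctop ι _ hgmeas, ← hlaw,
        integral_map hXmeas.aemeasurable hgmeas.aestronglyMeasurable]
      refine integral_congr_ae (Filter.Eventually.of_forall fun ω => ?_)
      show a ω i ^ 2 = F (X ω) i ^ 2
      rw [hFa ω i]
    have hw := sum_sq (γ := Fin m × Fin n) (M := m)
      (fun k σ => sg (σ (k, i)) * sg (σ (k, z)))
      (fun k σ => by rw [mul_pow, sg_sq, sg_sq, mul_one])
      (horth i hi)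
    rw [hcard] at hw
    have h2 : ∑ σ : (Fin m × Fin n) → Bool, c.toReal * (F (ι σ) i) ^ 2
        = c.toReal * (q ^ 2) ^ 2
            * ∑ σ : (Fin m × Fin n) → Bool, (∑ k : Fin m, sg (σ (k, i)) * sg (σ (k, z))) ^ 2 := by
      rw [Finset.mul_sum]
      refine Finset.sum_congr rfl fun σ _ => ?_
      rw [hFι]
      ring
    rw [h1, h2, hw, hctoReal, hq2]
    have hpow : ((2:ℝ) ^ (m * n)) ≠ 0 := by positivity
    have hmne : ((m:ℝ)) ≠ 0 := ne_of_gt hm0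
    field_simp
  -- setup for part (iii)
  set I : Finset (Fin n) := Finset.univ.filter (fun i : Fin n => i ≠ z) with hIdef
  have hIerase : I = Finset.univ.erase z := Finset.filter_ne' Finset.univ z
  have hIcard : I.card = n - 1 := by
    rw [hIerase, Finset.card_erase_of_mem (Finset.mem_univ z), Finset.card_univ,
      Fintype.card_fin]
  have hImem : ∀ i : Fin n, i ∈ I ↔ i ≠ z := by
    intro i
    rw [hIdef]
    simp
  have hNcast : ((n - 1 : ℕ) : ℝ) = (n : ℝ) - 1 := by
    rw [Nat.cast_sub hn1, Nat.cast_one]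
  have hp0 : (0:ℝ) < (m:ℝ)⁻¹ := by positivity
  have hp1 : ((m:ℝ))⁻¹ ≤ 1 := by
    rw [inv_le_one_iff₀]
    right
    exact_mod_cast hm
  -- |F (ι σ) i| bounds
  have hFsq : ∀ σ i, (F (ι σ) i) ^ 2 ≤ 1 := by
    intro σ i
    have habs : |F (ι σ) i| ≤ 1 := by
      rw [hFι]
      rw [abs_mul]
      have h1 : |∑ k : Fin m, sg (σ (k, i)) * sg (σ (k, z))| ≤ (m:ℝ) := by
        refine le_trans (Finset.abs_sum_le_sum_abs _ _) ?_
        have : ∀ k : Fin m, |sg (σ (k, i)) * sg (σ (k, z))| = 1 := by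
          intro k
          rw [abs_mul, sg_abs, sg_abs, mul_one]
        rw [Finset.sum_congr rfl fun k _ => this k, Finset.sum_const, Finset.card_univ,
          Fintype.card_fin, nsmul_eq_mul, mul_one]
      have h2 : |q ^ 2| = ((m:ℝ))⁻¹ := by rw [abs_of_nonneg (sq_nonneg q), hq2]
      rw [h2]
      calc ((m:ℝ))⁻¹ * |∑ k : Fin m, sg (σ (k, i)) * sg (σ (k, z))|
          ≤ ((m:ℝ))⁻¹ * (m:ℝ) := by
            exact mul_le_mul_of_nonneg_left h1 (le_of_lt hp0)
        _ = 1 := by field_simp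
    calc (F (ι σ) i) ^ 2 = |F (ι σ) i| ^ 2 := (sq_abs _).symm
      _ ≤ 1 ^ 2 := by
          exact pow_le_pow_left₀ (abs_nonneg _) habs 2
      _ = 1 := one_pow 2
  -- convexity bound for the exponential
  have hconv : ∀ (l y : ℝ), 0 ≤ y → y ≤ 1 →
      Real.exp (-(l * y)) ≤ 1 - (1 - Real.exp (-l)) * y := by
    intro l y hy0 hy1
    have h := convexOn_exp.2 (Set.mem_univ (0:ℝ)) (Set.mem_univ (-l))
      (by linarith : (0:ℝ) ≤ 1 - y) hy0 (by ring)
    simp only [smul_eq_mul] at h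
    have e1 : (1 - y) * 0 + y * (-l) = -(l * y) := by ring
    rw [e1, Real.exp_zero] at h
    linarith
  -- the change of variables
  set T : ((Fin m × Fin n) → Bool) → ((Fin m × Fin n) → Bool) :=
    fun σ p => if p.2 = z then σ p else xor (σ (p.1, z)) (σ p) with hTdef
  have hTz : ∀ σ k, T σ (k, z) = σ (k, z) := fun σ k => if_pos rfl
  have hTi : ∀ σ (k : Fin m) (i : Fin n), i ≠ z → T σ (k, i) = xor (σ (k, z)) (σ (k, i)) :=
    fun σ k i hi => if_neg hi
  have hTinv : Function.Involutive T := by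
    intro σ
    funext p
    rcases p with ⟨k, j⟩
    by_cases hj : j = z
    · subst hj
      rw [hTz, hTz]
    · rw [hTi _ _ _ hj, hTz, hTi _ _ _ hj]
      cases σ (k, j) <;> cases σ (k, z) <;> rfl
  -- second orthogonality (columns)
  have horth2 : ∀ k l : Fin m, k ≠ l →
      ∑ τ : Fin m → Bool, sg (τ k) * sg (τ l) = 0 := by
    intro k l hkl
    refine flip_sum k _ fun τ => ?_
    rw [Function.update_self, Function.update_of_ne (Ne.symm hkl), sg_not]
    ring
  have hcardcol : (Fintype.card (Fin m → Bool) : ℝ) = 2 ^ m := by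
    rw [Fintype.card_fun, Fintype.card_bool, Fintype.card_fin]
    norm_num
  have hmne : ((m:ℝ)) ≠ 0 := ne_of_gt hm0
  -- part (iii)
  have part3 : ∀ t : ℝ, 0 < t →
      μ {ω | ∑ i ∈ I, (a ω i) ^ 2 ≤ ((n:ℝ) - 1) * (1 / m - t)}
        ≤ ENNReal.ofReal (Real.exp (-2 * ((n:ℝ) - 1) * t ^ 2)) := by
    intro t ht
    set s₀ : ℝ := ((n:ℝ) - 1) * (1 / m - t) with hs₀
    set c' : ℝ := 1 - Real.exp (-(4 * t)) with hc'
    set S : Set ((Fin m × Fin n) → ℝ) := {x | ∑ i ∈ I, (F x i) ^ 2 ≤ s₀} with hSdef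
    have hSm : MeasurableSet S := measurableSet_le
      (Finset.measurable_sum I fun i _ => (hFmeas i).pow_const 2) measurable_const
    have hEeq : {ω | ∑ i ∈ I, (a ω i) ^ 2 ≤ s₀} = X ⁻¹' S := by
      ext ω
      simp only [Set.mem_setOf_eq, Set.mem_preimage, hSdef]
      rw [Finset.sum_congr rfl fun i _ => by rw [hFa ω i]]
    have hmap : μ {ω | ∑ i ∈ I, (a ω i) ^ 2 ≤ s₀}
        = ∑ σ : (Fin m × Fin n) → Bool, c * S.indicator 1 (ι σ) := by
      rw [hEeq, ← Measure.map_apply hXmeas hSm, hlaw, sum_dirac_apply c ι hSm]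
    have hofreal : μ {ω | ∑ i ∈ I, (a ω i) ^ 2 ≤ s₀}
        = ENNReal.ofReal (∑ σ : (Fin m × Fin n) → Bool,
            c.toReal * S.indicator (1 : ((Fin m × Fin n) → ℝ) → ℝ) (ι σ)) := by
      rw [hmap, ENNReal.ofReal_sum_of_nonneg
        (f := fun σ : (Fin m × Fin n) → Bool =>
          c.toReal * S.indicator (1 : ((Fin m × Fin n) → ℝ) → ℝ) (ι σ))
        (fun σ _ => mul_nonneg ENNReal.toReal_nonneg
          (Set.indicator_nonneg (fun _ _ => zero_le_one) _))]
      refine Finset.sum_congr rfl fun σ _ => ?_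
      by_cases h : ι σ ∈ S
      · rw [Set.indicator_of_mem h, Set.indicator_of_mem h, Pi.one_apply, Pi.one_apply,
          mul_one, mul_one, ENNReal.ofReal_toReal hctop]
      · rw [Set.indicator_of_notMem h, Set.indicator_of_notMem h, mul_zero, mul_zero,
          ENNReal.ofReal_zero]
    rw [hofreal]
    refine ENNReal.ofReal_le_ofReal ?_
    -- the real Chernoff estimate
    have hind : ∀ σ : (Fin m × Fin n) → Bool, S.indicator (1 : ((Fin m × Fin n) → ℝ) → ℝ) (ι σ)
        ≤ Real.exp ((4*t) * (s₀ - ∑ i ∈ I, (F (ι σ) i) ^ 2)) := by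
      intro σ
      by_cases h : ι σ ∈ S
      · rw [Set.indicator_of_mem h, Pi.one_apply]
        refine Real.one_le_exp (mul_nonneg (by linarith) ?_)
        have hGs : ∑ i ∈ I, (F (ι σ) i) ^ 2 ≤ s₀ := h
        linarith
      · rw [Set.indicator_of_notMem h]
        exact le_of_lt (Real.exp_pos _)
    have hprodbound : ∀ σ : (Fin m × Fin n) → Bool,
        Real.exp ((4*t) * (s₀ - ∑ i ∈ I, (F (ι σ) i) ^ 2))
        ≤ Real.exp ((4*t) * s₀) * ∏ i ∈ I, (1 - c' * (F (ι σ) i) ^ 2) := by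
      intro σ
      have e1 : (4*t) * (s₀ - ∑ i ∈ I, (F (ι σ) i) ^ 2)
          = (4*t) * s₀ + (∑ i ∈ I, -((4*t) * (F (ι σ) i) ^ 2)) := by
        rw [Finset.sum_neg_distrib, ← Finset.mul_sum]
        ring
      rw [e1, Real.exp_add, Real.exp_sum]
      refine mul_le_mul_of_nonneg_left ?_ (le_of_lt (Real.exp_pos _))
      refine Finset.prod_le_prod (fun i _ => le_of_lt (Real.exp_pos _)) (fun i _ => ?_)
      exact hconv (4*t) ((F (ι σ) i) ^ 2) (sq_nonneg _) (hFsq σ i)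
    have hcol : ∑ τ : Fin m → Bool, (1 - c' * (q ^ 2 * ∑ k : Fin m, sg (τ k)) ^ 2)
        = 2 ^ m * (1 - c' * (m:ℝ)⁻¹) := by
      have hw2 := sum_sq (γ := Fin m) (M := m) (fun k τ => sg (τ k))
        (fun k τ => sg_sq _) horth2
      rw [Fintype.card_fin] at hw2
      have hsplit : ∑ τ : Fin m → Bool, (1 - c' * (q ^ 2 * ∑ k : Fin m, sg (τ k)) ^ 2)
          = (Fintype.card (Fin m → Bool) : ℝ)
            - c' * (q ^ 2) ^ 2 * ∑ τ : Fin m → Bool, (∑ k : Fin m, sg (τ k)) ^ 2 := by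
        rw [Finset.sum_sub_distrib, Finset.sum_const, Finset.card_univ, nsmul_eq_mul, mul_one]
        congr 1
        rw [Finset.mul_sum]
        refine Finset.sum_congr rfl fun τ _ => ?_
        ring
      rw [hsplit, hw2, hcardcol, hq2]
      field_simp
    set H : Fin n → (Fin m → Bool) → ℝ :=
      fun i τ => if i ∈ I then 1 - c' * (q ^ 2 * ∑ k : Fin m, sg (τ k)) ^ 2 else 1 with hHdef
    have hfact : ∑ σ : (Fin m × Fin n) → Bool,
        ∏ i ∈ I, (1 - c' * (q ^ 2 * ∑ k : Fin m, sg (σ (k, i))) ^ 2)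
        = 2 ^ m * (2 ^ m * (1 - c' * (m:ℝ)⁻¹)) ^ (n - 1) := by
      have h1 : ∀ σ : (Fin m × Fin n) → Bool,
          ∏ i ∈ I, (1 - c' * (q ^ 2 * ∑ k : Fin m, sg (σ (k, i))) ^ 2)
            = ∏ i : Fin n, H i (fun k => σ (k, i)) := by
        intro σ
        rw [Finset.prod_congr rfl (fun i hi => by rw [hHdef]; simp only [if_pos hi] :
          ∀ i ∈ I, (1 - c' * (q ^ 2 * ∑ k : Fin m, sg (σ (k, i))) ^ 2)
            = H i (fun k => σ (k, i)))]
        exact Finset.prod_subset (Finset.subset_univ I)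
          (fun x _ hx => by rw [hHdef]; simp only [if_neg hx])
      simp only [h1]
      have h2 : ∑ σ : (Fin m × Fin n) → Bool, ∏ i : Fin n, H i (fun k => σ (k, i))
          = ∑ g : Fin n → Fin m → Bool, ∏ i : Fin n, H i (g i) := by
        rw [← Equiv.sum_comp (⟨fun g p => g p.2 p.1, fun σ i k => σ (k, i), fun g => rfl,
          fun σ => rfl⟩ : (Fin n → Fin m → Bool) ≃ ((Fin m × Fin n) → Bool))
          (fun σ => ∏ i : Fin n, H i (fun k => σ (k, i)))]
        exact Finset.sum_congr rfl fun g _ => Finset.prod_congr rfl fun i _ => rfl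
      rw [h2, ← Fintype.piFinset_univ, ← Finset.prod_univ_sum]
      rw [← Finset.mul_prod_erase Finset.univ _ (Finset.mem_univ z)]
      have hz' : ∑ τ : Fin m → Bool, H z τ = 2 ^ m := by
        have hzI : z ∉ I := by rw [hImem]; simp
        have h3 : ∀ τ, H z τ = 1 := fun τ => by rw [hHdef]; simp only [if_neg hzI]
        rw [Finset.sum_congr rfl fun τ _ => h3 τ, Finset.sum_const, Finset.card_univ,
          nsmul_eq_mul, mul_one, hcardcol]
      have herase : ∀ i ∈ Finset.univ.erase z, (∑ τ : Fin m → Bool, H i τ)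
          = 2 ^ m * (1 - c' * (m:ℝ)⁻¹) := by
        intro i hi
        have hiI : i ∈ I := by rw [hImem]; exact Finset.ne_of_mem_erase hi
        have h3 : ∀ τ, H i τ = 1 - c' * (q ^ 2 * ∑ k : Fin m, sg (τ k)) ^ 2 :=
          fun τ => by rw [hHdef]; simp only [if_pos hiI]
        rw [Finset.sum_congr rfl fun τ _ => h3 τ, hcol]
      rw [hz', Finset.prod_congr rfl herase, Finset.prod_const,
        Finset.card_erase_of_mem (Finset.mem_univ z), Finset.card_univ, Fintype.card_fin]
    -- change of variables
    have hcov : ∑ σ : (Fin m × Fin n) → Bool, ∏ i ∈ I, (1 - c' * (F (ι σ) i) ^ 2)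
        = ∑ σ : (Fin m × Fin n) → Bool,
            ∏ i ∈ I, (1 - c' * (q ^ 2 * ∑ k : Fin m, sg (σ (k, i))) ^ 2) := by
      rw [← hTinv.bijective.sum_comp (fun σ => ∏ i ∈ I, (1 - c' * (F (ι σ) i) ^ 2))]
      refine Finset.sum_congr rfl fun σ _ => Finset.prod_congr rfl fun i hi => ?_
      have hiz : i ≠ z := (hImem i).1 hi
      have hFT : F (ι (T σ)) i = q ^ 2 * ∑ k : Fin m, sg (σ (k, i)) := by
        rw [hFι]
        congr 1
        refine Finset.sum_congr rfl fun k _ => ?_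
        rw [hTz, hTi _ _ _ hiz, sg_xor]
        linear_combination sg (σ (k, i)) * hgb (σ (k, z))
      rw [hFT]
    -- numeric collection
    have hcollect : ∑ σ : (Fin m × Fin n) → Bool, c.toReal * S.indicator (1 : ((Fin m × Fin n) → ℝ) → ℝ) (ι σ)
        ≤ Real.exp ((4*t) * s₀) * (1 - c' * (m:ℝ)⁻¹) ^ (n - 1) := by
      have step1 : ∑ σ : (Fin m × Fin n) → Bool, c.toReal * S.indicator (1 : ((Fin m × Fin n) → ℝ) → ℝ) (ι σ)
          ≤ ∑ σ : (Fin m × Fin n) → Bool,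
              c.toReal * (Real.exp ((4*t) * s₀) * ∏ i ∈ I, (1 - c' * (F (ι σ) i) ^ 2)) := by
        refine Finset.sum_le_sum fun σ _ => ?_
        exact mul_le_mul_of_nonneg_left (le_trans (hind σ) (hprodbound σ))
          ENNReal.toReal_nonneg
      refine le_trans step1 (le_of_eq ?_)
      have step2 : ∑ σ : (Fin m × Fin n) → Bool,
          c.toReal * (Real.exp ((4*t) * s₀) * ∏ i ∈ I, (1 - c' * (F (ι σ) i) ^ 2))
          = Real.exp ((4*t) * s₀) * (c.toReal
              * ∑ σ : (Fin m × Fin n) → Bool, ∏ i ∈ I, (1 - c' * (F (ι σ) i) ^ 2)) := by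
        rw [Finset.mul_sum, Finset.mul_sum]
        refine Finset.sum_congr rfl fun σ _ => by ring
      rw [step2, hcov, hfact, hctoReal]
      congr 1
      have hmn : m + m * (n - 1) = m * n := by
        have h4 : n - 1 + 1 = n := Nat.sub_add_cancel hn1
        calc m + m * (n - 1) = m * ((n - 1) + 1) := by ring
          _ = m * n := by rw [h4]
      rw [mul_pow, ← pow_mul]
      rw [show (2:ℝ) ^ m * ((2:ℝ) ^ (m * (n - 1)) * (1 - c' * (m:ℝ)⁻¹) ^ (n - 1))
          = (2:ℝ) ^ (m + m * (n - 1)) * (1 - c' * (m:ℝ)⁻¹) ^ (n - 1) by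
        rw [pow_add]; ring]
      rw [hmn]
      have h2mn : ((2:ℝ) ^ (m * n)) ≠ 0 := by positivity
      field_simp
    refine le_trans hcollect ?_
    -- the analytic estimate
    have hBrw : 1 - c' * (m:ℝ)⁻¹ = 1 - (m:ℝ)⁻¹ + (m:ℝ)⁻¹ * Real.exp (-(4*t)) := by
      rw [hc']
      ring
    have hb0 : 0 ≤ Real.exp ((4*t) * ((m:ℝ)⁻¹ - t))
        * (1 - (m:ℝ)⁻¹ + (m:ℝ)⁻¹ * Real.exp (-(4*t))) := by
      have h2 : 0 ≤ (m:ℝ)⁻¹ * Real.exp (-(4*t)) := mul_nonneg hp0.le (Real.exp_pos _).le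
      exact mul_nonneg (Real.exp_pos _).le (by linarith)
    have hkey := mgf_bound hp0 hp1 ht
    have hexp1 : Real.exp ((4*t) * s₀)
        = (Real.exp ((4*t) * ((m:ℝ)⁻¹ - t))) ^ (n - 1) := by
      rw [← Real.exp_nat_mul]
      congr 1
      rw [hs₀, hNcast, one_div]
      ring
    rw [hexp1, hBrw, ← mul_pow]
    calc (Real.exp ((4*t) * ((m:ℝ)⁻¹ - t))
            * (1 - (m:ℝ)⁻¹ + (m:ℝ)⁻¹ * Real.exp (-(4*t)))) ^ (n - 1)
        ≤ (Real.exp (-2 * t ^ 2)) ^ (n - 1) := pow_le_pow_left₀ hb0 hkey _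
      _ = Real.exp (-2 * ((n:ℝ) - 1) * t ^ 2) := by
          rw [← Real.exp_nat_mul, hNcast]
          congr 1
          ring
  -- part (iv)
  have hameas : ∀ i, Measurable fun ω => a ω i := by
    intro i
    have h : (fun ω => a ω i) = fun ω => F (X ω) i := funext fun ω => hFa ω i
    rw [h]
    exact (hFmeas i).comp hXmeas
  have part4 : ∀ c₀ t : ℝ, 1 < c₀ → 0 < t →
      1 / (c₀ ^ 2 - 1) ≤ ((n:ℝ) - 1) * (1 / m - t) →
      1 - ENNReal.ofReal (Real.exp (-2 * ((n:ℝ) - 1) * t ^ 2)) ≤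
        μ {ω | c₀ ^ 2 / (c₀ ^ 2 - 1) ≤ ∑ i, (a ω i) ^ 2} := by
    intro c₀ t hc₀ ht hle
    have hc1 : 0 < c₀ ^ 2 - 1 := by nlinarith
    have hEm : MeasurableSet {ω | ∑ i ∈ I, (a ω i) ^ 2 ≤ ((n:ℝ) - 1) * (1 / m - t)} :=
      measurableSet_le (Finset.measurable_sum I fun i _ => (hameas i).pow_const 2)
        measurable_const
    have hgood : μ {ω | a ω z = 1}ᶜ = 0 := by
      have h := part1
      rw [ae_iff] at h
      rw [Set.compl_setOf]
      exact h
    have hsub : {ω | ∑ i ∈ I, (a ω i) ^ 2 ≤ ((n:ℝ) - 1) * (1 / m - t)}ᶜ ∩ {ω | a ω z = 1}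
        ⊆ {ω | c₀ ^ 2 / (c₀ ^ 2 - 1) ≤ ∑ i, (a ω i) ^ 2} := by
      rintro ω ⟨hne, hz1⟩
      have h1 : ¬ (∑ i ∈ I, (a ω i) ^ 2 ≤ ((n:ℝ) - 1) * (1 / m - t)) := hne
      push_neg at h1
      have hz1' : a ω z = 1 := hz1
      have hsplit : ∑ i : Fin n, (a ω i) ^ 2
          = (a ω z) ^ 2 + ∑ i ∈ Finset.univ.erase z, (a ω i) ^ 2 :=
        (Finset.add_sum_erase Finset.univ _ (Finset.mem_univ z)).symm
      have hIsum : ∑ i ∈ Finset.univ.erase z, (a ω i) ^ 2 = ∑ i ∈ I, (a ω i) ^ 2 := by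
        rw [hIerase]
      have hval : c₀ ^ 2 / (c₀ ^ 2 - 1) = 1 + 1 / (c₀ ^ 2 - 1) := by
        field_simp
        ring
      show c₀ ^ 2 / (c₀ ^ 2 - 1) ≤ ∑ i, (a ω i) ^ 2
      rw [hval, hsplit, hz1', one_pow, hIsum]
      linarith
    calc 1 - ENNReal.ofReal (Real.exp (-2 * ((n:ℝ) - 1) * t ^ 2))
        ≤ 1 - μ {ω | ∑ i ∈ I, (a ω i) ^ 2 ≤ ((n:ℝ) - 1) * (1 / m - t)} :=
          tsub_le_tsub_left (part3 t ht) 1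
      _ = μ ({ω | ∑ i ∈ I, (a ω i) ^ 2 ≤ ((n:ℝ) - 1) * (1 / m - t)}ᶜ) :=
          (prob_compl_eq_one_sub hEm).symm
      _ = μ ({ω | ∑ i ∈ I, (a ω i) ^ 2 ≤ ((n:ℝ) - 1) * (1 / m - t)}ᶜ ∩ {ω | a ω z = 1}) :=
          (measure_inter_conull hgood).symm
      _ ≤ μ {ω | c₀ ^ 2 / (c₀ ^ 2 - 1) ≤ ∑ i, (a ω i) ^ 2} := measure_mono hsub
  exact ⟨part1, part2, part3, part4⟩
end
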